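/- The category Cu of Cu-semigroups is complete. More precisely: given a small category I and a functor F : I → Cu, regard each F(i) as a Q-semigroup via its way-below relation ≪, let (S, (π_i)_i) be the limit of F in Q (the PoM of compatible families with the componentwise way-below relation ≪_pw), and let τ(S) be the τ-completion of S. Then τ(S), together with the Cu-morphisms ψ_i := τ(π_i) : τ(S) → τ(F(i)) ≅ F(i), is a limit of F in Cu. -/

import Mathlib

/-!
STATEMENT 2: The category Cu is complete.  More precisely: given a small category I
and a functor F : I → Cu, regard each F(i) as a Q-semigroup via its way-below
relation ≪, let (S, (π_i)) be the limit of F in Q (the PoM of compatible families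
with the componentwise way-below relation ≪_pw), and let τ(S) be the τ-completion of
S.  Then τ(S), together with the Cu-morphisms ψ_i := τ(π_i) : τ(S) → τ(F(i)) ≅ F(i)
(given on classes of paths by [f] ↦ (f 0)_i), is a limit of F in Cu.
-/

universe u v w

/-- `x` is *way below* `y` (sequential compact containment `x ≪ y`). -/
def WayBelow {M : Type u} [Preorder M] (x y : M) : Prop :=
  ∀ s : ℕ → M, Monotone s → ∀ a : M, IsLUB (Set.range s) a → y ≤ a → ∃ n, x ≤ s n

theorem WayBelow.le {M : Type u} [Preorder M] {x y : M} (h : WayBelow x y) : x ≤ y := by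
  obtain ⟨n, hn⟩ := h (fun _ => y) monotone_const y (by simp [Set.range_const]) le_rfl
  exact hn

theorem WayBelow.mono {M : Type u} [Preorder M] {x' x y y' : M} (h : WayBelow x y)
    (hx : x' ≤ x) (hy : y ≤ y') : WayBelow x' y' := fun s hs a ha hya => by
  obtain ⟨n, hn⟩ := h s hs a ha (hy.trans hya)
  exact ⟨n, hx.trans hn⟩

theorem WayBelow.trans {M : Type u} [Preorder M] {x y z : M} (h : WayBelow x y)
    (h' : WayBelow y z) : WayBelow x z := h'.mono h.le le_rfl

/-- A map preserves suprema of increasing sequences. -/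
def PreservesSeqSup {M : Type u} {N : Type v} [Preorder M] [Preorder N] (f : M → N) : Prop :=
  ∀ s : ℕ → M, Monotone s → ∀ a : M, IsLUB (Set.range s) a →
    IsLUB (Set.range fun n => f (s n)) (f a)

/-- Axiom (O1): every increasing sequence has a supremum. -/
def SeqSupExists (M : Type u) [Preorder M] : Prop :=
  ∀ s : ℕ → M, Monotone s → ∃ a : M, IsLUB (Set.range s) a

/-- Axiom (O4): suprema of increasing sequences are additive. -/
def SeqSupAdditive (M : Type u) [AddCommMonoid M] [Preorder M] : Prop :=
  ∀ s t : ℕ → M, Monotone s → Monotone t → ∀ a b : M,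
    IsLUB (Set.range s) a → IsLUB (Set.range t) b →
    IsLUB (Set.range fun n => s n + t n) (a + b)

/-- The axioms of a positively ordered monoid: the partial order is translation
invariant and `0` is the least element. -/
structure PoMAxioms (M : Type u) [AddCommMonoid M] [PartialOrder M] : Prop where
  add_le_add_left : ∀ a b : M, a ≤ b → ∀ c : M, c + a ≤ c + b
  zero_le : ∀ a : M, 0 ≤ a

/-- A `PoM`-morphism: preserves addition, order and `0`. -/
structure IsPoMHom {M : Type u} {N : Type v} [AddCommMonoid M] [PartialOrder M]
    [AddCommMonoid N] [PartialOrder N] (f : M → N) : Prop where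
  map_zero : f 0 = 0
  map_add : ∀ x y : M, f (x + y) = f x + f y
  mono : Monotone f

/-- The axioms of an abstract Cuntz semigroup (`Cu`-semigroup). -/
structure CuAxioms (M : Type u) [AddCommMonoid M] [PartialOrder M] extends PoMAxioms M : Prop where
  O1 : SeqSupExists M
  O2 : ∀ x : M, ∃ s : ℕ → M, (∀ n, WayBelow (s n) (s (n + 1))) ∧ IsLUB (Set.range s) x
  O3 : ∀ x' x y' y : M, WayBelow x' x → WayBelow y' y → WayBelow (x' + y') (x + y)
  O4 : SeqSupAdditive M

/-- A `Cu`-morphism: preserves addition, order, `0`, way-below, and suprema of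
increasing sequences. -/
structure IsCuHom {M : Type u} {N : Type v} [AddCommMonoid M] [PartialOrder M]
    [AddCommMonoid N] [PartialOrder N] (f : M → N) extends IsPoMHom f : Prop where
  map_wayBelow : ∀ x y : M, WayBelow x y → WayBelow (f x) (f y)
  map_seqSup : PreservesSeqSup f

/-- An ideal of a `Cu`-semigroup: a downward hereditary submonoid that is closed
under suprema of increasing sequences. -/
structure IsCuIdeal {M : Type u} [AddCommMonoid M] [PartialOrder M] (I : Set M) : Prop where
  zero_mem : (0 : M) ∈ I
  add_mem : ∀ x y : M, x ∈ I → y ∈ I → x + y ∈ I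
  lower : ∀ x y : M, x ≤ y → y ∈ I → x ∈ I
  seqSup_mem : ∀ s : ℕ → M, Monotone s → (∀ n, s n ∈ I) → ∀ a : M, IsLUB (Set.range s) a → a ∈ I
theorem isCuHom_id {M : Type u} [AddCommMonoid M] [PartialOrder M] : IsCuHom (id : M → M) :=
  ⟨⟨rfl, fun _ _ => rfl, fun _ _ h => h⟩, fun _ _ h => h, fun _ _ _ ha => ha⟩

theorem IsCuHom.comp {M : Type u} {N : Type v} {P : Type w} [AddCommMonoid M] [PartialOrder M]
    [AddCommMonoid N] [PartialOrder N] [AddCommMonoid P] [PartialOrder P]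
    {g : N → P} {f : M → N} (hg : IsCuHom g) (hf : IsCuHom f) : IsCuHom (g ∘ f) := by
  refine ⟨⟨?_, ?_, hg.mono.comp hf.mono⟩, ?_, ?_⟩
  · simp [Function.comp, hf.map_zero, hg.map_zero]
  · intro x y; simp [Function.comp, hf.map_add, hg.map_add]
  · exact fun x y h => hg.map_wayBelow _ _ (hf.map_wayBelow _ _ h)
  · exact fun s hs a ha => hg.map_seqSup _ (hf.mono.comp hs) _ (hf.map_seqSup s hs a ha)

/-- The category `Cu` of abstract Cuntz semigroups and Cu-morphisms. -/
structure CuCat : Type (u + 1) where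
  carrier : Type u
  [addCommMonoid : AddCommMonoid carrier]
  [partialOrder : PartialOrder carrier]
  cu : CuAxioms carrier

attribute [instance] CuCat.addCommMonoid CuCat.partialOrder

instance : CategoryTheory.Category CuCat.{u} where
  Hom S T := { f : S.carrier → T.carrier // IsCuHom f }
  id S := ⟨id, isCuHom_id⟩
  comp f g := ⟨g.1 ∘ f.1, g.2.comp f.2⟩
/-- The (nonpositive) half-line `(-∞, 0]`, the domain of paths. -/
abbrev PathDom : Type := {t : ℝ // t ≤ 0}

/-- A path in a semigroup equipped with an auxiliary relation `r`: an order
preserving, sup-continuous, `r`-increasing map `(-∞,0] → M`. -/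
structure QPath (M : Type u) [Preorder M] (r : M → M → Prop) : Type u where
  toFun : PathDom → M
  mono : Monotone toFun
  lub : ∀ t : PathDom, IsLUB (toFun '' {s | s < t}) (toFun t)
  rel : ∀ ⦃s t : PathDom⦄, s < t → r (toFun s) (toFun t)

namespace QPath

variable {M : Type u} [Preorder M] {r : M → M → Prop}

theorem ext' {f g : QPath M r} (h : ∀ t, f.toFun t = g.toFun t) : f = g := by
  cases f; cases g; simp only [mk.injEq]; exact funext h

/-- The relation `f ≾ g` on paths: for every `t < 0` there is `t' < 0` with
`r (f t) (g t')`. -/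
def LE (f g : QPath M r) : Prop :=
  ∀ t : PathDom, t.1 < 0 → ∃ t' : PathDom, t'.1 < 0 ∧ r (f.toFun t) (g.toFun t')

/-- Equivalence of paths: mutual domination. -/
def Equiv (f g : QPath M r) : Prop := LE f g ∧ LE g f

theorem LE.refl (f : QPath M r) : LE f f := by
  intro t ht
  refine ⟨⟨t.1 / 2, by linarith⟩, by linarith, f.rel ?_⟩
  exact Subtype.mk_lt_mk.mpr (by linarith)

theorem LE.trans' (hr : Transitive r) {f g h : QPath M r} (h₁ : LE f g) (h₂ : LE g h) :
    LE f h := by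
  intro t ht
  obtain ⟨t', ht', h1⟩ := h₁ t ht
  obtain ⟨t'', ht'', h2⟩ := h₂ t' ht'
  exact ⟨t'', ht'', hr h1 h2⟩

theorem equiv_equivalence (hr : Transitive r) : Equivalence (Equiv (M := M) (r := r)) :=
  ⟨fun f => ⟨LE.refl f, LE.refl f⟩, fun h => ⟨h.2, h.1⟩,
   fun h h' => ⟨LE.trans' hr h.1 h'.1, LE.trans' hr h'.2 h.2⟩⟩

end QPath

/-- The `τ`-construction: equivalence classes of paths. -/
def Tau (M : Type u) [Preorder M] (r : M → M → Prop) : Type u :=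
  Quot (QPath.Equiv (M := M) (r := r))

/-- The class of a path in the `τ`-construction. -/
def Tau.mk {M : Type u} [Preorder M] {r : M → M → Prop} (f : QPath M r) : Tau M r :=
  Quot.mk _ f

theorem Tau.exact {M : Type u} [Preorder M] {r : M → M → Prop} (hr : Transitive r)
    {f g : QPath M r} (h : Tau.mk f = Tau.mk g) : QPath.Equiv f g :=
  ((QPath.equiv_equivalence hr).eqvGen_iff).mp (Quot.eq.mp h)

/-- The order on `τ(M)` induced by the relation `≾` on paths. -/
def Tau.LE {M : Type u} [Preorder M] {r : M → M → Prop} (x y : Tau M r) : Prop :=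
  ∀ f g : QPath M r, x = Tau.mk f → y = Tau.mk g → QPath.LE f g

open CategoryTheory

/-- The limit of a functor `F : I ⥤ Cu` in `PoM`: the additive submonoid of the
set-theoretic product consisting of the compatible families, with componentwise
addition and order. -/
def compatSubmonoidCu {I : Type u} [SmallCategory I] (F : I ⥤ CuCat.{u}) :
    AddSubmonoid (∀ i, (F.obj i).carrier) where
  carrier := {s | ∀ (i j : I) (f : i ⟶ j), (F.map f).1 (s i) = s j}
  zero_mem' := fun i j f => by simpa using (F.map f).2.map_zero
  add_mem' := fun {a b} ha hb i j f => by
    show (F.map f).1 (a i + b i) = a j + b j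
    rw [(F.map f).2.map_add, ha i j f, hb i j f]

/-- The componentwise way-below relation `≪_pw` on the limit in `Q`. -/
def cuRelPW {I : Type u} [SmallCategory I] (F : I ⥤ CuCat.{u})
    (x y : ↥(compatSubmonoidCu F)) : Prop :=
  ∀ i : I, WayBelow (x.1 i) (y.1 i)

/-- The `τ`-completion of the limit of `F` in `Q`. -/
abbrev TauLim {I : Type u} [SmallCategory I] (F : I ⥤ CuCat.{u}) : Type u :=
  Tau ↥(compatSubmonoidCu F) (cuRelPW F)


namespace CuProof

open Set

/-! ### Generic helpers -/

theorem isLUB_range_of_cofinal {M : Type v} [Preorder M] {A : Set M} {a : M}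
    (h : IsLUB A a) (u : ℕ → M) (hu : ∀ n, u n ∈ A)
    (hcof : ∀ x ∈ A, ∃ n, x ≤ u n) : IsLUB (Set.range u) a := by
  constructor
  · rintro _ ⟨n, rfl⟩; exact h.1 (hu n)
  · intro b hb
    refine h.2 fun x hx => ?_
    obtain ⟨n, hn⟩ := hcof x hx
    exact hn.trans (hb ⟨n, rfl⟩)

/-- The canonical increasing sequence `t - 1/(n+1)` approaching `t` from below. -/
noncomputable def tseq (t : PathDom) (n : ℕ) : PathDom :=
  ⟨t.1 - 1 / (n + 1), by
    have h : (0 : ℝ) < 1 / ((n : ℝ) + 1) := by positivity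
    have := t.2; linarith⟩

theorem tseq_lt (t : PathDom) (n : ℕ) : tseq t n < t := by
  rw [← Subtype.coe_lt_coe]
  show t.1 - 1 / ((n : ℝ) + 1) < t.1
  have h : (0 : ℝ) < 1 / ((n : ℝ) + 1) := by positivity
  linarith

theorem tseq_mono (t : PathDom) : Monotone (tseq t) := by
  intro m n hmn
  rw [← Subtype.coe_le_coe]
  show t.1 - 1 / ((m : ℝ) + 1) ≤ t.1 - 1 / ((n : ℝ) + 1)
  have h1 : (0 : ℝ) < m + 1 := by positivity
  have : (m : ℝ) + 1 ≤ (n : ℝ) + 1 := by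
    have := (Nat.cast_le (α := ℝ)).2 hmn; linarith
  have := one_div_le_one_div_of_le h1 this
  linarith

theorem tseq_cofinal (t : PathDom) {s : PathDom} (hs : s < t) : ∃ n, s ≤ tseq t n := by
  obtain ⟨n, hn⟩ := exists_nat_one_div_lt (ε := t.1 - s.1)
    (by rwa [← Subtype.coe_lt_coe, ← sub_pos] at hs)
  refine ⟨n, ?_⟩
  rw [← Subtype.coe_le_coe]
  show s.1 ≤ t.1 - 1 / ((n : ℝ) + 1)
  linarith

theorem path_csl {M : Type v} [Preorder M] {r : M → M → Prop} (f : QPath M r) (t : PathDom) :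
    IsLUB (Set.range fun n => f.toFun (tseq t n)) (f.toFun t) := by
  refine isLUB_range_of_cofinal (f.lub t) _ (fun n => ⟨tseq t n, tseq_lt t n, rfl⟩) ?_
  rintro _ ⟨s, hs, rfl⟩
  obtain ⟨n, hn⟩ := tseq_cofinal t hs
  exact ⟨n, f.mono hn⟩

section SBasics

variable {I : Type u} [CategoryTheory.SmallCategory I] (F : I ⥤ CuCat.{u})

/-- Abbreviation for the limit of `F` in `Q`. -/
abbrev SF := ↥(compatSubmonoidCu F)

theorem Sle_iff {x y : SF F} : x ≤ y ↔ ∀ i, x.1 i ≤ y.1 i := by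
  rw [← Subtype.coe_le_coe]
  exact Pi.le_def

theorem Sadd_apply (x y : SF F) (i : I) : (x + y).1 i = x.1 i + y.1 i := rfl

theorem Szero_apply (i : I) : ((0 : SF F)).1 i = 0 := rfl

theorem rtrans : Transitive (cuRelPW F) :=
  fun _ _ _ h h' i => (h i).trans (h' i)

theorem rle {x y : SF F} (h : cuRelPW F x y) : x ≤ y :=
  (Sle_iff F).2 fun i => (h i).le

theorem rmono {x' x y y' : SF F} (hx : x' ≤ x) (h : cuRelPW F x y) (hy : y ≤ y') :
    cuRelPW F x' y' :=
  fun i => (h i).mono ((Sle_iff F).1 hx i) ((Sle_iff F).1 hy i)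

theorem radd {a b c d : SF F} (h : cuRelPW F a b) (h' : cuRelPW F c d) :
    cuRelPW F (a + c) (b + d) := fun i => by
  rw [Sadd_apply, Sadd_apply]
  exact (F.obj i).cu.O3 _ _ _ _ (h i) (h' i)

theorem rzero (y : SF F) : cuRelPW F 0 y := fun i s _ _ _ _ =>
  ⟨0, by rw [Szero_apply]; exact (F.obj i).cu.zero_le _⟩

theorem Spom : PoMAxioms (SF F) where
  add_le_add_left a b hab c := (Sle_iff F).2 fun i => by
    rw [Sadd_apply, Sadd_apply]
    exact (F.obj i).cu.add_le_add_left _ _ ((Sle_iff F).1 hab i) _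
  zero_le a := (Sle_iff F).2 fun i => by
    rw [Szero_apply]; exact (F.obj i).cu.zero_le _

theorem Sadd_le_add {a b c d : SF F} (h : a ≤ b) (h' : c ≤ d) : a + c ≤ b + d := by
  have h1 := (Spom F).add_le_add_left c d h' a
  have h2 := (Spom F).add_le_add_left a b h d
  calc a + c ≤ a + d := h1
    _ = d + a := add_comm _ _
    _ ≤ d + b := (Spom F).add_le_add_left a b h d
    _ = b + d := add_comm _ _

theorem S_isLUB_of_components {u : ℕ → SF F} {a : SF F}
    (h : ∀ i, IsLUB (Set.range fun n => (u n).1 i) (a.1 i)) :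
    IsLUB (Set.range u) a := by
  constructor
  · rintro _ ⟨n, rfl⟩
    exact (Sle_iff F).2 fun i => (h i).1 ⟨n, rfl⟩
  · intro b hb
    exact (Sle_iff F).2 fun i => (h i).2 (by
      rintro _ ⟨n, rfl⟩
      exact (Sle_iff F).1 (hb ⟨n, rfl⟩) i)

theorem S_exists_lub {u : ℕ → SF F} (hu : Monotone u) :
    ∃ a : SF F, IsLUB (Set.range u) a ∧
      ∀ i, IsLUB (Set.range fun n => (u n).1 i) (a.1 i) := by
  have hmi : ∀ i, Monotone fun n => (u n).1 i := fun i m n hmn =>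
    (Sle_iff F).1 (hu hmn) i
  have hlub : ∀ i, ∃ x, IsLUB (Set.range fun n => (u n).1 i) x := fun i =>
    (F.obj i).cu.O1 _ (hmi i)
  choose a ha using hlub
  have hcompat : ∀ (i j : I) (g : i ⟶ j), (F.map g).1 (a i) = a j := by
    intro i j g
    have h1 := (F.map g).2.map_seqSup _ (hmi i) _ (ha i)
    have h2 : (fun n => (F.map g).1 ((u n).1 i)) = fun n => (u n).1 j :=
      funext fun n => (u n).2 i j g
    rw [h2] at h1
    exact h1.unique (ha j)
  refine ⟨⟨a, hcompat⟩, ?_, ha⟩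
  exact S_isLUB_of_components F ha

theorem S_O1 : SeqSupExists (SF F) := fun u hu =>
  ((S_exists_lub F hu).elim fun a h => ⟨a, h.1⟩)

theorem S_isLUB_components {u : ℕ → SF F} (hu : Monotone u) {a : SF F}
    (h : IsLUB (Set.range u) a) :
    ∀ i, IsLUB (Set.range fun n => (u n).1 i) (a.1 i) := by
  obtain ⟨a', h1, h2⟩ := S_exists_lub F hu
  rwa [h.unique h1]

theorem S_O4 : SeqSupAdditive (SF F) := by
  intro s t hs ht a b ha hb
  have hsc := S_isLUB_components F hs ha
  have htc := S_isLUB_components F ht hb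
  refine S_isLUB_of_components F fun i => ?_
  have := (F.obj i).cu.O4 _ _ (fun m n h => (Sle_iff F).1 (hs h) i)
    (fun m n h => (Sle_iff F).1 (ht h) i) _ _ (hsc i) (htc i)
  simpa [Sadd_apply] using this

end SBasics


/-! ### Paths in `SF F` and the `τ`-completion structure -/

def pmax (s t : PathDom) : PathDom := ⟨max s.1 t.1, max_le s.2 t.2⟩

theorem le_pmax_left (s t : PathDom) : s ≤ pmax s t :=
  Subtype.coe_le_coe.mp (le_max_left _ _)

theorem le_pmax_right (s t : PathDom) : t ≤ pmax s t :=
  Subtype.coe_le_coe.mp (le_max_right _ _)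

noncomputable def phalf (t : PathDom) : PathDom := ⟨t.1 / 2, by linarith [t.2]⟩

theorem lt_phalf {t : PathDom} (ht : t.1 < 0) : t < phalf t :=
  Subtype.coe_lt_coe.mp (by show t.1 < t.1 / 2; linarith)

theorem phalf_neg {t : PathDom} (ht : t.1 < 0) : (phalf t).1 < 0 := by
  show t.1 / 2 < 0; linarith

section PathS

variable {I : Type u} [CategoryTheory.SmallCategory I] (F : I ⥤ CuCat.{u})

def pZero : QPath (SF F) (cuRelPW F) where
  toFun _ := 0
  mono _ _ _ := le_rfl
  lub t := ⟨by rintro _ ⟨s, _, rfl⟩; exact le_rfl,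
    fun b hb => hb ⟨tseq t 0, tseq_lt t 0, rfl⟩⟩
  rel _ _ _ := rzero F _

noncomputable def pAdd (f g : QPath (SF F) (cuRelPW F)) : QPath (SF F) (cuRelPW F) where
  toFun t := f.toFun t + g.toFun t
  mono _ _ h := Sadd_le_add F (f.mono h) (g.mono h)
  lub t := by
    have h4 := S_O4 F _ _ (f.mono.comp (tseq_mono t)) (g.mono.comp (tseq_mono t)) _ _
      (path_csl f t) (path_csl g t)
    constructor
    · rintro _ ⟨s, hs, rfl⟩
      exact Sadd_le_add F (f.mono (le_of_lt hs)) (g.mono (le_of_lt hs))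
    · intro b hb
      exact h4.2 (by rintro _ ⟨n, rfl⟩; exact hb ⟨tseq t n, tseq_lt t n, rfl⟩)
  rel _ _ h := radd F (f.rel h) (g.rel h)

theorem pAdd_apply (f g : QPath (SF F) (cuRelPW F)) (t : PathDom) :
    (pAdd F f g).toFun t = f.toFun t + g.toFun t := rfl

noncomputable def pShift (f : QPath (SF F) (cuRelPW F)) (δ : ℝ) (hδ : 0 < δ) :
    QPath (SF F) (cuRelPW F) where
  toFun t := f.toFun ⟨t.1 - δ, by linarith [t.2]⟩
  mono s t h := f.mono (Subtype.mk_le_mk.2 (by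
    have : s.1 ≤ t.1 := Subtype.coe_le_coe.2 h
    linarith))
  lub t := by
    constructor
    · rintro _ ⟨s, hs, rfl⟩
      have : s.1 < t.1 := Subtype.coe_lt_coe.2 hs
      exact f.mono (Subtype.mk_le_mk.2 (by linarith))
    · intro b hb
      refine (f.lub ⟨t.1 - δ, by linarith [t.2]⟩).2 ?_
      rintro _ ⟨s', hs', rfl⟩
      have hs'1 : s'.1 < t.1 - δ := hs'
      have hle : s'.1 + δ ≤ 0 := by linarith [t.2]
      have hmem : (⟨s'.1 + δ, hle⟩ : PathDom) ∈ {s | s < t} :=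
        by rw [Set.mem_setOf_eq, ← Subtype.coe_lt_coe]; show s'.1 + δ < t.1; linarith
      have h2 := hb (Set.mem_image_of_mem _ hmem)
      convert h2 using 2
      exact Subtype.ext (by show s'.1 = s'.1 + δ - δ; ring)
  rel s t h := f.rel (Subtype.mk_lt_mk.2 (by
    have : s.1 < t.1 := Subtype.coe_lt_coe.2 h
    linarith))

theorem pShift_apply (f : QPath (SF F) (cuRelPW F)) (δ : ℝ) (hδ : 0 < δ) (t : PathDom) :
    (pShift F f δ hδ).toFun t = f.toFun ⟨t.1 - δ, by linarith [t.2]⟩ := rfl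

theorem LE_add {f f' g g' : QPath (SF F) (cuRelPW F)} (h1 : QPath.LE f f')
    (h2 : QPath.LE g g') : QPath.LE (pAdd F f g) (pAdd F f' g') := by
  intro t ht
  obtain ⟨t1, ht1, hr1⟩ := h1 t ht
  obtain ⟨t2, ht2, hr2⟩ := h2 t ht
  refine ⟨pmax t1 t2, max_lt ht1 ht2, ?_⟩
  exact radd F (rmono F le_rfl hr1 (f'.mono (le_pmax_left t1 t2)))
    (rmono F le_rfl hr2 (g'.mono (le_pmax_right t1 t2)))

/-! ### The order and monoid structure on `TauLim F` -/

def tle : TauLim F → TauLim F → Prop := Tau.LE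

theorem tle_iff {f g : QPath (SF F) (cuRelPW F)} :
    tle F (Tau.mk f) (Tau.mk g) ↔ QPath.LE f g := by
  constructor
  · exact fun h => h f g rfl rfl
  · intro h f' g' h1 h2
    have e1 := Tau.exact (rtrans F) h1
    have e2 := Tau.exact (rtrans F) h2
    exact QPath.LE.trans' (rtrans F) e1.2 (QPath.LE.trans' (rtrans F) h e2.1)

theorem tau_rep (x : TauLim F) : ∃ f, x = Tau.mk f := by
  obtain ⟨f, hf⟩ := Quot.exists_rep x
  exact ⟨f, hf.symm⟩

noncomputable def tzero : TauLim F := Tau.mk (pZero F)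

noncomputable def tadd : TauLim F → TauLim F → TauLim F :=
  Quot.map₂ (pAdd F)
    (fun f _ _ h => ⟨LE_add F (QPath.LE.refl f) h.1, LE_add F (QPath.LE.refl f) h.2⟩)
    (fun _ _ g h => ⟨LE_add F h.1 (QPath.LE.refl g), LE_add F h.2 (QPath.LE.refl g)⟩)

theorem tadd_mk (f g : QPath (SF F) (cuRelPW F)) :
    tadd F (Tau.mk f) (Tau.mk g) = Tau.mk (pAdd F f g) := rfl

noncomputable def tauPO : PartialOrder (TauLim F) where
  le := tle F
  le_refl x := by
    intro f g h1 h2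
    exact (Tau.exact (rtrans F) (h1.symm.trans h2)).1
  le_trans x y z h1 h2 := by
    intro f h hf hh
    obtain ⟨g, hg⟩ := tau_rep F y
    exact QPath.LE.trans' (rtrans F) (h1 f g hf hg) (h2 g h hg hh)
  le_antisymm x y h1 h2 := by
    obtain ⟨f, hf⟩ := tau_rep F x
    obtain ⟨g, hg⟩ := tau_rep F y
    rw [hf, hg]
    exact Quot.sound ⟨h1 f g hf hg, h2 g f hg hf⟩

noncomputable def tauACM : AddCommMonoid (TauLim F) where
  add := tadd F
  zero := tzero F
  add_assoc a b c := by
    induction a using Quot.ind with | _ f =>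
    induction b using Quot.ind with | _ g =>
    induction c using Quot.ind with | _ h =>
    show tadd F (tadd F (Tau.mk f) (Tau.mk g)) (Tau.mk h) =
      tadd F (Tau.mk f) (tadd F (Tau.mk g) (Tau.mk h))
    rw [tadd_mk, tadd_mk, tadd_mk, tadd_mk]
    exact congrArg Tau.mk (QPath.ext' fun t => add_assoc _ _ _)
  zero_add a := by
    induction a using Quot.ind with | _ f =>
    show tadd F (tzero F) (Tau.mk f) = Tau.mk f
    rw [tzero, tadd_mk]
    exact congrArg Tau.mk (QPath.ext' fun t => zero_add _)
  add_zero a := by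
    induction a using Quot.ind with | _ f =>
    show tadd F (Tau.mk f) (tzero F) = Tau.mk f
    rw [tzero, tadd_mk]
    exact congrArg Tau.mk (QPath.ext' fun t => add_zero _)
  add_comm a b := by
    induction a using Quot.ind with | _ f =>
    induction b using Quot.ind with | _ g =>
    show tadd F (Tau.mk f) (Tau.mk g) = tadd F (Tau.mk g) (Tau.mk f)
    rw [tadd_mk, tadd_mk]
    exact congrArg Tau.mk (QPath.ext' fun t => add_comm _ _)
  nsmul := fun n x => Nat.rec (tzero F) (fun _ ih => tadd F ih x) n
  nsmul_zero := fun _ => rfl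
  nsmul_succ := fun _ _ => rfl

end PathS


/-! ### Generic grid-to-path machinery -/

section Grid

variable {M : Type v} [PartialOrder M] {r : M → M → Prop}

/-- Discretization index: the least `k ≥ 1` with `-k/2^n < t`. -/
noncomputable def kap (n : ℕ) (t : ℝ) : ℕ := ⌊(-t) * 2 ^ n⌋₊ + 1

theorem kap_pos (n : ℕ) (t : ℝ) : 1 ≤ kap n t := Nat.le_add_left 1 _

theorem kap_zero (n : ℕ) : kap n 0 = 1 := by simp [kap]

theorem kap_cast (n : ℕ) (t : ℝ) : ((kap n t : ℝ)) = (⌊(-t) * 2 ^ n⌋₊ : ℝ) + 1 := by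
  rw [kap]; push_cast; ring

theorem gtime_lt {t : ℝ} (n : ℕ) : -(kap n t : ℝ) / 2 ^ n < t := by
  have h := Nat.lt_floor_add_one ((-t) * 2 ^ n)
  have h2 : (0 : ℝ) < 2 ^ n := by positivity
  rw [div_lt_iff₀ h2, kap_cast]
  nlinarith

theorem gtime_ge {t : ℝ} (ht : t ≤ 0) (n : ℕ) :
    t - 1 / 2 ^ n ≤ -(kap n t : ℝ) / 2 ^ n := by
  have h2 : (0 : ℝ) < 2 ^ n := by positivity
  have h := Nat.floor_le (by nlinarith : (0 : ℝ) ≤ (-t) * 2 ^ n)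
  rw [le_div_iff₀ h2, kap_cast]
  have h4 : (1:ℝ)/2^n * 2^n = 1 := by field_simp
  nlinarith

theorem kap_anti (n : ℕ) {s t : ℝ} (h : s ≤ t) : kap n t ≤ kap n s := by
  have h2 : (0 : ℝ) < 2 ^ n := by positivity
  have := Nat.floor_le_floor (by nlinarith : (-t) * 2 ^ n ≤ (-s) * 2 ^ n)
  exact Nat.add_le_add_right this 1

theorem kap_succ_le (n : ℕ) {t : ℝ} (ht : t ≤ 0) : kap (n + 1) t ≤ 2 * kap n t := by
  have h2 : (0 : ℝ) < 2 ^ n := by positivity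
  suffices h : ⌊(-t) * 2 ^ (n+1)⌋₊ < 2 * ⌊(-t) * 2 ^ n⌋₊ + 2 by
    rw [kap, kap]; omega
  rw [Nat.floor_lt (by nlinarith [pow_pos (by norm_num : (0:ℝ) < 2) (n+1)])]
  push_cast
  have h1 := Nat.lt_floor_add_one ((-t) * 2 ^ n)
  have h3 : (2:ℝ) ^ (n+1) = 2 ^ n * 2 := by ring
  nlinarith

variable (hO1 : SeqSupExists M)
  (hrle : ∀ {a b : M}, r a b → a ≤ b)
  (hler : ∀ {a b c : M}, a ≤ b → r b c → r a c)
  (hrle' : ∀ {a b c : M}, r a b → b ≤ c → r a c)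
  (W : ℕ → ℕ → M)
  (hWc : ∀ (n k : ℕ), 1 ≤ k → W (n + 1) (2 * k) = W n k)
  (hWr : ∀ (n m k j : ℕ), 1 ≤ k → 1 ≤ j → (j : ℝ) / 2 ^ m < (k : ℝ) / 2 ^ n →
    r (W n k) (W m j))

include hrle W hWc hWr

theorem gseq_mono (t : PathDom) : Monotone fun n => W n (kap n t.1) := by
  apply monotone_nat_of_le_succ
  intro n
  rcases Nat.lt_or_ge (kap (n+1) t.1) (2 * kap n t.1) with h | h
  · refine hrle (hWr n (n+1) (kap n t.1) (kap (n+1) t.1) (kap_pos _ _) (kap_pos _ _) ?_)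
    have h4 : ((kap (n+1) t.1 : ℝ)) < 2 * (kap n t.1 : ℝ) := by exact_mod_cast h
    rw [div_lt_div_iff₀ (by positivity) (by positivity)]
    have h3 : (2:ℝ) ^ (n+1) = 2 ^ n * 2 := by ring
    have h2 : (0 : ℝ) < 2 ^ n := by positivity
    nlinarith
  · have h5 : kap (n+1) t.1 = 2 * kap n t.1 :=
      le_antisymm (kap_succ_le n t.2) h
    rw [h5, hWc n _ (kap_pos _ _)]

include hO1

noncomputable def gfun (t : PathDom) : M :=
  (hO1 _ (gseq_mono hrle W hWc hWr t)).choose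

theorem gfun_isLUB (t : PathDom) :
    IsLUB (Set.range fun n => W n (kap n t.1)) (gfun hO1 hrle W hWc hWr t) :=
  (hO1 _ (gseq_mono hrle W hWc hWr t)).choose_spec

theorem gfun_le {t : PathDom} {c : M} (h : ∀ n, W n (kap n t.1) ≤ c) :
    gfun hO1 hrle W hWc hWr t ≤ c :=
  (gfun_isLUB hO1 hrle W hWc hWr t).2 (by rintro _ ⟨n, rfl⟩; exact h n)

theorem W_le_gfun (t : PathDom) (n : ℕ) :
    W n (kap n t.1) ≤ gfun hO1 hrle W hWc hWr t :=
  (gfun_isLUB hO1 hrle W hWc hWr t).1 ⟨n, rfl⟩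

theorem glow {m j : ℕ} (t : PathDom) (hj : 1 ≤ j) (h : -(j : ℝ) / 2 ^ m < t.1) :
    W m j ≤ gfun hO1 hrle W hWc hWr t := by
  rw [neg_div] at h
  have hpos : (0 : ℝ) < t.1 + (j : ℝ) / 2 ^ m := by linarith
  obtain ⟨n, hn⟩ := exists_pow_lt_of_lt_one hpos (by norm_num : (1:ℝ)/2 < 1)
  have hn' : (1 : ℝ) / 2 ^ n < t.1 + (j : ℝ) / 2 ^ m := by
    rwa [div_pow, one_pow] at hn
  have h1 : -((j : ℝ) / 2 ^ m) < -((kap n t.1 : ℝ) / 2 ^ n) := by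
    have hge := gtime_ge t.2 n
    rw [neg_div] at hge
    linarith
  rw [neg_lt_neg_iff] at h1
  exact le_trans (hrle (hWr m n j (kap n t.1) hj (kap_pos _ _) h1))
    (W_le_gfun hO1 hrle W hWc hWr t n)

theorem ghigh {m j : ℕ} (t : PathDom) (hj : 1 ≤ j) (h : t.1 ≤ -(j : ℝ) / 2 ^ m) :
    gfun hO1 hrle W hWc hWr t ≤ W m j := by
  refine gfun_le hO1 hrle W hWc hWr fun n => ?_
  have h1 : -((kap n t.1 : ℝ) / 2 ^ n) < -((j : ℝ) / 2 ^ m) := by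
    have := lt_of_lt_of_le (gtime_lt n) h
    rw [neg_div, neg_div] at this
    exact this
  rw [neg_lt_neg_iff] at h1
  exact hrle (hWr n m (kap n t.1) j (kap_pos _ _) hj h1)

theorem gfun_mono : Monotone (gfun hO1 hrle W hWc hWr) := by
  intro s t h
  have h' : s.1 ≤ t.1 := Subtype.coe_le_coe.2 h
  refine gfun_le hO1 hrle W hWc hWr fun n => ?_
  rcases Nat.lt_or_ge (kap n t.1) (kap n s.1) with hk | hk
  · refine le_trans (hrle (hWr n n (kap n s.1) (kap n t.1) (kap_pos _ _) (kap_pos _ _) ?_))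
      (W_le_gfun hO1 hrle W hWc hWr t n)
    have : ((kap n t.1 : ℝ)) < (kap n s.1 : ℝ) := by exact_mod_cast hk
    gcongr
  · have heq : kap n s.1 = kap n t.1 := le_antisymm hk (kap_anti n h')
    rw [heq]
    exact W_le_gfun hO1 hrle W hWc hWr t n

theorem gfun_lub (t : PathDom) :
    IsLUB ((gfun hO1 hrle W hWc hWr) '' {s | s < t}) (gfun hO1 hrle W hWc hWr t) := by
  constructor
  · rintro _ ⟨s, hs, rfl⟩
    exact gfun_mono hO1 hrle W hWc hWr (le_of_lt hs)
  · intro b hb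
    refine gfun_le hO1 hrle W hWc hWr fun n => ?_
    have hu : -(kap n t.1 : ℝ) / 2 ^ n < t.1 := gtime_lt n
    have hs0 : (-(kap n t.1 : ℝ) / 2 ^ n + t.1) / 2 ≤ 0 := by
      have := t.2; linarith
    set s : PathDom := ⟨(-(kap n t.1 : ℝ) / 2 ^ n + t.1) / 2, hs0⟩ with hsdef
    have hst : s < t := by
      rw [← Subtype.coe_lt_coe]
      show (-(kap n t.1 : ℝ) / 2 ^ n + t.1) / 2 < t.1
      linarith
    have h1 : W n (kap n t.1) ≤ gfun hO1 hrle W hWc hWr s := by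
      refine glow hO1 hrle W hWc hWr s (kap_pos _ _) ?_
      show -(kap n t.1 : ℝ) / 2 ^ n < (-(kap n t.1 : ℝ) / 2 ^ n + t.1) / 2
      linarith
    exact h1.trans (hb ⟨s, hst, rfl⟩)

include hler hrle'

theorem gfun_rel {s t : PathDom} (hst : s < t) :
    r (gfun hO1 hrle W hWc hWr s) (gfun hO1 hrle W hWc hWr t) := by
  have h' : s.1 < t.1 := Subtype.coe_lt_coe.2 hst
  obtain ⟨m, hm⟩ := exists_pow_lt_of_lt_one (by linarith : (0:ℝ) < (t.1 - s.1) / 2)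
    (by norm_num : (1:ℝ)/2 < 1)
  have hm' : (1 : ℝ) / 2 ^ m < (t.1 - s.1) / 2 := by rwa [div_pow, one_pow] at hm
  set k := kap m t.1 with hk
  have hge := gtime_ge t.2 m
  have h1 : gfun hO1 hrle W hWc hWr s ≤ W m (k + 1) := by
    refine ghigh hO1 hrle W hWc hWr s (by omega) ?_
    have : -((k : ℝ) + 1) / 2 ^ m = -(k : ℝ) / 2 ^ m - 1 / 2 ^ m := by ring
    push_cast
    rw [this]
    linarith
  have h2 : r (W m (k + 1)) (W m k) := by
    refine hWr m m (k+1) k (by omega) (kap_pos _ _) ?_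
    rw [div_lt_div_iff₀ (by positivity) (by positivity)]
    push_cast
    nlinarith [pow_pos (by norm_num : (0:ℝ) < 2) m]
  have h3 : W m k ≤ gfun hO1 hrle W hWc hWr t := W_le_gfun hO1 hrle W hWc hWr t m
  exact hler h1 (hrle' h2 h3)

/-- The path glued from a grid. -/
noncomputable def gridPath : QPath M r where
  toFun := gfun hO1 hrle W hWc hWr
  mono := gfun_mono hO1 hrle W hWc hWr
  lub := gfun_lub hO1 hrle W hWc hWr
  rel _ _ h := gfun_rel hO1 hrle hler hrle' W hWc hWr h

theorem gridPath_zero_isLUB :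
    IsLUB (Set.range fun n => W n 1)
      ((gridPath hO1 hrle hler hrle' W hWc hWr).toFun ⟨0, le_refl 0⟩) := by
  have h := gfun_isLUB hO1 hrle W hWc hWr ⟨0, le_refl 0⟩
  have : (fun n => W n (kap n ((⟨0, le_refl 0⟩ : PathDom)).1)) = fun n => W n 1 := by
    funext n
    rw [show ((⟨0, le_refl 0⟩ : PathDom)).1 = (0:ℝ) from rfl, kap_zero]
  rwa [this] at h

end Grid



/-! ### The supremum path of an increasing sequence of paths in `SF F` -/

section SupPath

variable {I : Type u} [CategoryTheory.SmallCategory I] (F : I ⥤ CuCat.{u})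
variable (fs : ℕ → QPath (SF F) (cuRelPW F))
variable (hfs : ∀ n, QPath.LE (fs n) (fs (n + 1)))

/-- Segment endpoints `-1/(k+1)` increasing to `0`. -/
noncomputable def seg (k : ℕ) : ℝ := -1 / (k + 1)

theorem seg_neg (k : ℕ) : seg k < 0 := by
  rw [seg]
  have : (0:ℝ) < (k:ℝ) + 1 := by positivity
  exact div_neg_of_neg_of_pos (by norm_num) this

theorem seg_lt_seg {j k : ℕ} (h : j < k) : seg j < seg k := by
  rw [seg, seg, div_lt_div_iff₀ (by positivity) (by positivity)]
  have : (j : ℝ) < (k : ℝ) := by exact_mod_cast h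
  nlinarith

/-- The canonical time `-1/(v+1)` as an element of `PathDom`. -/
noncomputable def dtime (v : ℕ) : PathDom := ⟨seg v, le_of_lt (seg_neg v)⟩

include hfs in
theorem LE_chain {m n : ℕ} (h : m ≤ n) : QPath.LE (fs m) (fs n) := by
  induction n with
  | zero => exact Nat.le_zero.mp h ▸ QPath.LE.refl _
  | succ n ih =>
    rcases Nat.lt_or_ge m (n+1) with h' | h'
    · exact QPath.LE.trans' (rtrans F) (ih (by omega)) (hfs n)
    · have : m = n + 1 := by omega
      exact this ▸ QPath.LE.refl _

include hfs in
theorem step_ex (k : ℕ) (b : PathDom) (hb : b.1 < 0) :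
    ∃ w : {x : ℝ // x < 0},
      cuRelPW F ((fs k).toFun b) ((fs (k+1)).toFun ⟨w.1, le_of_lt w.2⟩) ∧
      cuRelPW F ((fs (Nat.unpair k).1).toFun (dtime (Nat.unpair k).2))
        ((fs (k+1)).toFun ⟨w.1, le_of_lt w.2⟩) := by
  obtain ⟨w1, hw1, hr1⟩ := hfs k b hb
  obtain ⟨w2, hw2, hr2⟩ := LE_chain F fs hfs
    (show (Nat.unpair k).1 ≤ k + 1 from le_trans (Nat.unpair_left_le k) (Nat.le_succ k))
    (dtime (Nat.unpair k).2) (seg_neg _)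
  refine ⟨⟨max w1.1 w2.1, max_lt hw1 hw2⟩, ?_, ?_⟩
  · exact rmono F le_rfl hr1 ((fs (k+1)).mono (Subtype.coe_le_coe.mp (le_max_left _ _)))
  · exact rmono F le_rfl hr2 ((fs (k+1)).mono (Subtype.coe_le_coe.mp (le_max_right _ _)))

/-- The recursive choice of junction parameters `(a_k, b_k)`. -/
noncomputable def AB : ℕ → {p : ℝ × ℝ // p.1 < p.2 ∧ p.2 < 0}
  | 0 => ⟨(-1, -1/2), by norm_num, by norm_num⟩
  | (k+1) =>
    let w := (step_ex F fs hfs k ⟨(AB k).1.2, le_of_lt (AB k).2.2⟩ (AB k).2.2).choose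
    ⟨(w.1, w.1/2), by constructor <;> [linarith [w.2]; linarith [w.2]]⟩

noncomputable def aa (k : ℕ) : ℝ := (AB F fs hfs k).1.1
noncomputable def bb (k : ℕ) : ℝ := (AB F fs hfs k).1.2

theorem aa_lt_bb (k : ℕ) : aa F fs hfs k < bb F fs hfs k := (AB F fs hfs k).2.1
theorem bb_neg (k : ℕ) : bb F fs hfs k < 0 := (AB F fs hfs k).2.2
theorem aa_neg (k : ℕ) : aa F fs hfs k < 0 :=
  lt_trans (aa_lt_bb F fs hfs k) (bb_neg F fs hfs k)

/-- `bb k` and `aa (k+1)` as elements of `PathDom`. -/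
noncomputable def bbP (k : ℕ) : PathDom := ⟨bb F fs hfs k, le_of_lt (bb_neg F fs hfs k)⟩
noncomputable def aaP (k : ℕ) : PathDom := ⟨aa F fs hfs k, le_of_lt (aa_neg F fs hfs k)⟩

theorem junction (k : ℕ) :
    cuRelPW F ((fs k).toFun (bbP F fs hfs k)) ((fs (k+1)).toFun (aaP F fs hfs (k+1))) := by
  have h := (step_ex F fs hfs k ⟨(AB F fs hfs k).1.2, le_of_lt (AB F fs hfs k).2.2⟩
    (AB F fs hfs k).2.2).choose_spec.1
  exact h

theorem diag (k : ℕ) :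
    cuRelPW F ((fs (Nat.unpair k).1).toFun (dtime (Nat.unpair k).2))
      ((fs (k+1)).toFun (aaP F fs hfs (k+1))) := by
  have h := (step_ex F fs hfs k ⟨(AB F fs hfs k).1.2, le_of_lt (AB F fs hfs k).2.2⟩
    (AB F fs hfs k).2.2).choose_spec.2
  exact h

theorem chainC (k : ℕ) : ∀ j, j < k → ∀ (u : PathDom), aa F fs hfs k ≤ u.1 →
    cuRelPW F ((fs j).toFun (bbP F fs hfs j)) ((fs k).toFun u) := by
  induction k with
  | zero => intro j h; omega
  | succ k ih =>
    intro j h u hu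
    rcases Nat.lt_or_ge j k with h' | h'
    · have h1 := ih j h' (bbP F fs hfs k) (le_of_lt (aa_lt_bb F fs hfs k))
      have h2 := junction F fs hfs k
      refine rtrans F h1 (rmono F le_rfl h2 ((fs (k+1)).mono ?_))
      exact Subtype.coe_le_coe.mp hu
    · have hjk : j = k := by omega
      subst hjk
      exact rmono F le_rfl (junction F fs hfs j) ((fs (j+1)).mono (Subtype.coe_le_coe.mp hu))

theorem seg_succ_cast' (k : ℕ) : seg (k + 1) = -1 / ((k : ℝ) + 2) := by
  rw [seg]; push_cast; ring_nf

theorem seg_zero : seg 0 = -1 := by rw [seg]; norm_num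

theorem Kof_ex (q : ℝ) (hq : q < 0) : ∃ k : ℕ, q ≤ seg (k + 1) := by
  obtain ⟨v, hv⟩ := exists_nat_one_div_lt (show (0:ℝ) < -q by linarith)
  refine ⟨v, ?_⟩
  rw [seg_succ_cast']
  have h1 : (0:ℝ) < (v:ℝ) + 1 := by positivity
  have h3 : 1 / ((v:ℝ) + 2) ≤ 1 / ((v:ℝ) + 1) := by
    apply one_div_le_one_div_of_le h1; linarith
  have h4 : 1 / ((v:ℝ)+2) ≤ -q := le_trans h3 (le_of_lt hv)
  rw [neg_div, le_neg]
  exact h4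

/-- Segment index of `q < 0`: the least `k` with `q ≤ seg (k+1)`. -/
noncomputable def Kof (q : ℝ) (hq : q < 0) : ℕ := Nat.find (Kof_ex q hq)

theorem Kof_le (q : ℝ) (hq : q < 0) : q ≤ seg (Kof q hq + 1) :=
  Nat.find_spec (Kof_ex q hq)

theorem Kof_gt (q : ℝ) (hq : q < 0) (hq1 : -1 < q) : seg (Kof q hq) < q := by
  rcases Nat.eq_zero_or_pos (Kof q hq) with h | h
  · rw [h, seg_zero]; linarith
  · have hK : Kof q hq = Nat.find (Kof_ex q hq) := rfl
    have hlt : Kof q hq - 1 < Nat.find (Kof_ex q hq) := by omega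
    have hmin := Nat.find_min (Kof_ex q hq) hlt
    simp only [not_le] at hmin
    have h2 : Kof q hq - 1 + 1 = Kof q hq := by omega
    rw [h2] at hmin
    exact hmin

theorem Kof_mono {q v : ℝ} (hqv : q ≤ v) (hq : q < 0) (hv : v < 0) :
    Kof q hq ≤ Kof v hv :=
  Nat.find_mono fun n hn => le_trans hqv hn

/-- Slope-reparametrization of segment `k` onto `(aa k, bb k]`. -/
noncomputable def gam (k : ℕ) (q : ℝ) : ℝ :=
  bb F fs hfs k + (q - seg (k+1)) * ((bb F fs hfs k - aa F fs hfs k) / (seg (k+1) - seg k))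

theorem gam_le_bb (k : ℕ) {q : ℝ} (h : q ≤ seg (k+1)) : gam F fs hfs k q ≤ bb F fs hfs k := by
  rw [gam]
  have hs : (0:ℝ) < seg (k+1) - seg k := by linarith [seg_lt_seg (Nat.lt_succ_self k)]
  have hab : (0:ℝ) < bb F fs hfs k - aa F fs hfs k := by linarith [aa_lt_bb F fs hfs k]
  have : (q - seg (k+1)) * ((bb F fs hfs k - aa F fs hfs k) / (seg (k+1) - seg k)) ≤ 0 := by
    apply mul_nonpos_of_nonpos_of_nonneg
    · linarith
    · positivity
  linarith

theorem aa_lt_gam (k : ℕ) {q : ℝ} (h : seg k < q) : aa F fs hfs k < gam F fs hfs k q := by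
  rw [gam]
  have hs : (0:ℝ) < seg (k+1) - seg k := by linarith [seg_lt_seg (Nat.lt_succ_self k)]
  have hab : (0:ℝ) < bb F fs hfs k - aa F fs hfs k := by linarith [aa_lt_bb F fs hfs k]
  have key : (seg k - seg (k+1)) * ((bb F fs hfs k - aa F fs hfs k) / (seg (k+1) - seg k))
      = -(bb F fs hfs k - aa F fs hfs k) := by
    field_simp
    ring
  have hmono : (seg k - seg (k+1)) * ((bb F fs hfs k - aa F fs hfs k) / (seg (k+1) - seg k))
      < (q - seg (k+1)) * ((bb F fs hfs k - aa F fs hfs k) / (seg (k+1) - seg k)) := by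
    apply mul_lt_mul_of_pos_right _ (by positivity)
    linarith
  rw [key] at hmono
  linarith

theorem gam_neg (k : ℕ) {q : ℝ} (h : q ≤ seg (k+1)) : gam F fs hfs k q < 0 :=
  lt_of_le_of_lt (gam_le_bb F fs hfs k h) (bb_neg F fs hfs k)

theorem gam_strictMono (k : ℕ) {q q' : ℝ} (h : q < q') :
    gam F fs hfs k q < gam F fs hfs k q' := by
  rw [gam, gam]
  have hs : (0:ℝ) < seg (k+1) - seg k := by linarith [seg_lt_seg (Nat.lt_succ_self k)]
  have hab : (0:ℝ) < bb F fs hfs k - aa F fs hfs k := by linarith [aa_lt_bb F fs hfs k]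
  have := mul_lt_mul_of_pos_right (show q - seg (k+1) < q' - seg (k+1) by linarith)
    (show (0:ℝ) < (bb F fs hfs k - aa F fs hfs k) / (seg (k+1) - seg k) by positivity)
  linarith

/-- The reparametrized time, clamped into `PathDom`. -/
noncomputable def gamP (k : ℕ) (q : ℝ) : PathDom :=
  ⟨min (gam F fs hfs k q) 0, min_le_right _ _⟩

theorem gamP_val (k : ℕ) {q : ℝ} (h : q ≤ seg (k+1)) :
    (gamP F fs hfs k q).1 = gam F fs hfs k q :=
  min_eq_left (le_of_lt (gam_neg F fs hfs k h))

/-- The concatenated "pre-path" function. -/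
noncomputable def VV (q : ℝ) : SF F :=
  if hq : q < 0 then
    if -1 < q then (fs (Kof q hq)).toFun (gamP F fs hfs (Kof q hq) q)
    else 0
  else 0

theorem VV_rel {q v : ℝ} (hqv : q < v) (hv : v < 0) :
    cuRelPW F (VV F fs hfs q) (VV F fs hfs v) := by
  have hq : q < 0 := lt_trans hqv hv
  rw [VV, dif_pos hq, VV, dif_pos hv]
  rcases le_or_gt q (-1) with hq1 | hq1
  · rw [if_neg (by linarith)]
    rcases le_or_gt v (-1) with hv1 | hv1
    · rw [if_neg (by linarith)]
      exact rzero F 0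
    · rw [if_pos hv1]
      exact rzero F _
  · rw [if_pos hq1]
    have hv1 : -1 < v := by linarith
    rw [if_pos hv1]
    have hKle : Kof q hq ≤ Kof v hv := Kof_mono (le_of_lt hqv) hq hv
    rcases Nat.lt_or_ge (Kof q hq) (Kof v hv) with hK | hK
    · have h1 : (fs (Kof q hq)).toFun (gamP F fs hfs (Kof q hq) q) ≤
          (fs (Kof q hq)).toFun (bbP F fs hfs (Kof q hq)) := by
        apply (fs _).mono
        apply Subtype.coe_le_coe.mp
        rw [show ((gamP F fs hfs (Kof q hq) q : PathDom) : ℝ) =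
          (gamP F fs hfs (Kof q hq) q).1 from rfl, gamP_val F fs hfs _ (Kof_le q hq)]
        exact gam_le_bb F fs hfs _ (Kof_le q hq)
      have h2 := chainC F fs hfs (Kof v hv) (Kof q hq) hK (gamP F fs hfs (Kof v hv) v)
        (by
          rw [gamP_val F fs hfs _ (Kof_le v hv)]
          exact le_of_lt (aa_lt_gam F fs hfs _ (Kof_gt v hv hv1)))
      exact rmono F h1 h2 le_rfl
    · have hEq : Kof q hq = Kof v hv := le_antisymm hKle hK
      rw [hEq]
      apply (fs (Kof v hv)).rel
      apply Subtype.coe_lt_coe.mp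
      show (gamP F fs hfs (Kof v hv) q).1 < (gamP F fs hfs (Kof v hv) v).1
      rw [gamP_val F fs hfs _ (hEq ▸ Kof_le q hq), gamP_val F fs hfs _ (Kof_le v hv)]
      exact gam_strictMono F fs hfs _ hqv

theorem gam_at_end (k : ℕ) : gam F fs hfs k (seg (k+1)) = bb F fs hfs k := by
  rw [gam]; ring

/-- The grid obtained from `VV`. -/
noncomputable def WS (n k : ℕ) : SF F := VV F fs hfs (-(k : ℝ) / 2 ^ n)

theorem WS_compat (n k : ℕ) (hk : 1 ≤ k) : WS F fs hfs (n+1) (2*k) = WS F fs hfs n k := by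
  rw [WS, WS]
  congr 1
  push_cast
  rw [div_eq_div_iff (by positivity) (by positivity)]
  ring

theorem WS_rel (n m k j : ℕ) (hk : 1 ≤ k) (hj : 1 ≤ j)
    (h : (j : ℝ) / 2 ^ m < (k : ℝ) / 2 ^ n) :
    cuRelPW F (WS F fs hfs n k) (WS F fs hfs m j) := by
  apply VV_rel
  · rw [neg_div, neg_div]; exact neg_lt_neg h
  · rw [neg_div, neg_lt_zero]
    have hj' : (0:ℝ) < (j : ℝ) := by exact_mod_cast hj
    positivity

/-- The supremum path of the sequence `fs`. -/
noncomputable def Gpath : QPath (SF F) (cuRelPW F) :=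
  gridPath (S_O1 F) (fun h => rle F h) (fun h1 h2 => rmono F h1 h2 le_rfl)
    (fun h1 h2 => rmono F le_rfl h1 h2)
    (WS F fs hfs) (WS_compat F fs hfs) (WS_rel F fs hfs)

theorem Gpath_le_V {t : PathDom} {m j : ℕ} (hj : 1 ≤ j) (h : t.1 ≤ -(j : ℝ) / 2 ^ m) :
    (Gpath F fs hfs).toFun t ≤ WS F fs hfs m j :=
  ghigh (S_O1 F) (fun h => rle F h) (WS F fs hfs) (WS_compat F fs hfs) (WS_rel F fs hfs)
    t hj h

theorem V_le_Gpath {t : PathDom} {q : ℝ} (hq : q < t.1) :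
    VV F fs hfs q ≤ (Gpath F fs hfs).toFun t := by
  obtain ⟨m, hm⟩ := exists_pow_lt_of_lt_one (show (0:ℝ) < t.1 - q by linarith)
    (by norm_num : (1:ℝ)/2 < 1)
  have hm' : (1:ℝ) / 2 ^ m < t.1 - q := by rwa [div_pow, one_pow] at hm
  set j := kap m t.1 with hj
  have h1 : q < -(j : ℝ) / 2 ^ m := by
    have := gtime_ge t.2 m
    rw [← hj] at this
    linarith
  have h2 : -(j : ℝ) / 2 ^ m < 0 := by
    rw [neg_div, neg_lt_zero]
    have : (0:ℝ) < (j : ℝ) := by exact_mod_cast kap_pos m t.1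
    positivity
  have h3 : cuRelPW F (VV F fs hfs q) (WS F fs hfs m j) := by
    rw [WS]
    exact VV_rel F fs hfs h1 h2
  refine le_trans (rle F h3) ?_
  exact glow (S_O1 F) (fun h => rle F h) (WS F fs hfs) (WS_compat F fs hfs)
    (WS_rel F fs hfs) t (kap_pos m t.1) (gtime_lt m)

theorem Gpath_bound (t : PathDom) (ht : t.1 < 0) :
    ∃ (k : ℕ) (u : PathDom), u.1 < 0 ∧
      (Gpath F fs hfs).toFun t ≤ (fs k).toFun u := by
  obtain ⟨m, hm⟩ := pow_unbounded_of_one_lt (1 / (-t.1)) (by norm_num : (1:ℝ) < 2)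
  have hm2 : (1:ℝ) < (-t.1) * 2 ^ m := by
    have h0 : (0:ℝ) < -t.1 := by linarith
    rw [div_lt_iff₀ h0] at hm
    nlinarith
  set j := ⌊(-t.1) * 2 ^ m⌋₊ with hjdef
  have hj : 1 ≤ j := Nat.le_floor (by push_cast; linarith)
  have htime_ge : t.1 ≤ -(j : ℝ) / 2 ^ m := by
    have hfl := Nat.floor_le (show (0:ℝ) ≤ (-t.1) * 2 ^ m by nlinarith)
    rw [← hjdef] at hfl
    have h2m : (0:ℝ) < 2 ^ m := by positivity
    rw [neg_div, le_neg, div_le_iff₀ h2m]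
    nlinarith
  have h1 := Gpath_le_V F fs hfs hj htime_ge
  have htime_neg : -(j : ℝ) / 2 ^ m < 0 := by
    rw [neg_div, neg_lt_zero]
    have : (0:ℝ) < (j:ℝ) := by exact_mod_cast hj
    positivity
  rw [WS, VV, dif_pos htime_neg] at h1
  by_cases hcase : -1 < -(j : ℝ) / 2 ^ m
  · rw [if_pos hcase] at h1
    refine ⟨Kof _ htime_neg, gamP F fs hfs (Kof _ htime_neg) (-(j : ℝ) / 2 ^ m), ?_, h1⟩
    rw [gamP_val F fs hfs _ (Kof_le _ htime_neg)]
    exact gam_neg F fs hfs _ (Kof_le _ htime_neg)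
  · rw [if_neg hcase] at h1
    refine ⟨0, ⟨-1, by norm_num⟩, by norm_num, ?_⟩
    exact le_trans h1 ((Spom F).zero_le _)

theorem Kof_seg (k : ℕ) : Kof (seg (k+2)) (seg_neg _) = k + 1 := by
  refine le_antisymm (Nat.find_le le_rfl) ?_
  exact (Nat.le_find_iff (Kof_ex (seg (k+2)) (seg_neg _)) (k+1)).mpr
    (fun m hm => by rw [not_le]; exact seg_lt_seg (by omega))

theorem LE_fs_Gpath (n : ℕ) : QPath.LE (fs n) (Gpath F fs hfs) := by
  intro t ht
  obtain ⟨v, hv⟩ := exists_nat_one_div_lt (show (0:ℝ) < -t.1 by linarith)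
  have hts : t.1 ≤ seg v := by
    rw [seg, neg_div]
    linarith
  set k := Nat.pair n v with hk
  have hd : cuRelPW F ((fs n).toFun (dtime v))
      ((fs (k+1)).toFun (aaP F fs hfs (k+1))) := by
    have := diag F fs hfs k
    rw [hk, Nat.unpair_pair] at this
    exact this
  have h2 : (fs (k+1)).toFun (aaP F fs hfs (k+1)) ≤ VV F fs hfs (seg (k+2)) := by
    rw [VV, dif_pos (seg_neg _), if_pos (by
      rw [← seg_zero]
      exact seg_lt_seg (by omega)), Kof_seg k]
    apply (fs (k+1)).mono
    apply Subtype.coe_le_coe.mp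
    show aa F fs hfs (k+1) ≤ (gamP F fs hfs (k+1) (seg (k+2))).1
    rw [gamP_val F fs hfs _ (le_rfl), gam_at_end F fs hfs (k+1)]
    exact le_of_lt (aa_lt_bb F fs hfs (k+1))
  have h3 : VV F fs hfs (seg (k+2)) ≤
      (Gpath F fs hfs).toFun ⟨seg (k+3), le_of_lt (seg_neg _)⟩ :=
    V_le_Gpath F fs hfs (seg_lt_seg (by omega))
  refine ⟨⟨seg (k+3), le_of_lt (seg_neg _)⟩, seg_neg _, ?_⟩
  exact rmono F ((fs n).mono (Subtype.coe_le_coe.mp hts)) hd (le_trans h2 h3)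

theorem Gpath_LE {h : QPath (SF F) (cuRelPW F)} (hall : ∀ n, QPath.LE (fs n) h) :
    QPath.LE (Gpath F fs hfs) h := by
  intro t ht
  obtain ⟨k, u, hu, hle⟩ := Gpath_bound F fs hfs t ht
  obtain ⟨t', ht', hr⟩ := hall k u hu
  exact ⟨t', ht', rmono F hle hr le_rfl⟩

end SupPath


/-! ### `τ(S)` is a Cu-semigroup -/

section TauCu

variable {I : Type u} [CategoryTheory.SmallCategory I] (F : I ⥤ CuCat.{u})

attribute [local instance] tauACM tauPO

theorem mk_le_mk {f g : QPath (SF F) (cuRelPW F)} :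
    (Tau.mk f ≤ Tau.mk g) ↔ QPath.LE f g := tle_iff F

theorem mk_add_mk (f g : QPath (SF F) (cuRelPW F)) :
    (Tau.mk f + Tau.mk g) = Tau.mk (pAdd F f g) := rfl

theorem tau_zero_eq : (0 : TauLim F) = Tau.mk (pZero F) := rfl

theorem seq_rep (u : ℕ → TauLim F) (hu : Monotone u) :
    ∃ fs : ℕ → QPath (SF F) (cuRelPW F),
      (∀ n, u n = Tau.mk (fs n)) ∧ ∀ n, QPath.LE (fs n) (fs (n + 1)) := by
  choose fs hfs using fun n => tau_rep F (u n)
  refine ⟨fs, hfs, fun n => ?_⟩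
  have h := hu (Nat.le_succ n)
  rw [hfs n, hfs (n+1)] at h
  exact (mk_le_mk F).1 h

theorem sup_isLUB (fs : ℕ → QPath (SF F) (cuRelPW F))
    (hfs : ∀ n, QPath.LE (fs n) (fs (n + 1))) :
    IsLUB (Set.range fun n => Tau.mk (fs n)) (Tau.mk (Gpath F fs hfs)) := by
  constructor
  · rintro _ ⟨n, rfl⟩
    exact (mk_le_mk F).2 (LE_fs_Gpath F fs hfs n)
  · intro b hb
    obtain ⟨h, rfl⟩ := tau_rep F b
    exact (mk_le_mk F).2 (Gpath_LE F fs hfs fun n => (mk_le_mk F).1 (hb ⟨n, rfl⟩))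

theorem tau_O1 : SeqSupExists (TauLim F) := by
  intro u hu
  obtain ⟨fs, hrep, hfs⟩ := seq_rep F u hu
  refine ⟨Tau.mk (Gpath F fs hfs), ?_⟩
  have h : (fun n => Tau.mk (fs n)) = u := funext fun n => (hrep n).symm
  rw [← h]
  exact sup_isLUB F fs hfs

/-- Uniform domination of paths, characterizing way-below in `τ(S)`. -/
def Strong (f g : QPath (SF F) (cuRelPW F)) : Prop :=
  ∃ t₀ : PathDom, t₀.1 < 0 ∧ ∀ s : PathDom, s.1 < 0 →
    cuRelPW F (f.toFun s) (g.toFun t₀)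

theorem Strong.toLE {f g : QPath (SF F) (cuRelPW F)} (h : Strong F f g) :
    QPath.LE f g := fun s hs => ⟨h.choose, h.choose_spec.1, h.choose_spec.2 s hs⟩

theorem strong_wayBelow {f g : QPath (SF F) (cuRelPW F)} (h : Strong F f g) :
    WayBelow (Tau.mk f) (Tau.mk g) := by
  intro u hu a ha hle
  obtain ⟨fs, hrep, hfs⟩ := seq_rep F u hu
  have hG : a = Tau.mk (Gpath F fs hfs) := by
    have h2 := sup_isLUB F fs hfs
    have h3 : (fun n => Tau.mk (fs n)) = u := funext fun n => (hrep n).symm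
    rw [h3] at h2
    exact ha.unique h2
  rw [hG] at hle
  have hgG := (mk_le_mk F).1 hle
  obtain ⟨t0, ht0, hstrong⟩ := h
  obtain ⟨w, hw, hr1⟩ := hgG t0 ht0
  obtain ⟨k, uu, huu, hle2⟩ := Gpath_bound F fs hfs w hw
  refine ⟨k, ?_⟩
  rw [hrep k]
  refine (mk_le_mk F).2 fun s hs => ⟨uu, huu, ?_⟩
  exact rtrans F (hstrong s hs) (rmono F le_rfl hr1 hle2)

theorem one_div_succ_pos (k : ℕ) : (0:ℝ) < 1 / ((k:ℝ) + 1) := by positivity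

theorem one_div_succ_lt (k : ℕ) : (1:ℝ) / ((k:ℝ) + 2) < 1 / ((k:ℝ) + 1) := by
  rw [div_lt_div_iff₀ (by positivity) (by positivity)]
  linarith

/-- The `k`-th shift of a path. -/
noncomputable def shiftSeq (f : QPath (SF F) (cuRelPW F)) (k : ℕ) :
    QPath (SF F) (cuRelPW F) :=
  pShift F f (1 / ((k:ℝ) + 1)) (one_div_succ_pos k)

theorem shift_strong (f : QPath (SF F) (cuRelPW F)) (k : ℕ) :
    Strong F (shiftSeq F f k) (shiftSeq F f (k + 1)) := by
  set d1 : ℝ := 1 / ((k:ℝ) + 1) with hd1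
  set d2 : ℝ := 1 / ((k:ℝ) + 2) with hd2
  have hd21 : d2 < d1 := one_div_succ_lt k
  have hd2pos : 0 < d2 := by positivity
  refine ⟨⟨(d2 - d1) / 2, by linarith⟩, by show (d2 - d1)/2 < 0; linarith, ?_⟩
  intro s hs
  refine f.rel (Subtype.mk_lt_mk.2 ?_)
  push_cast
  have hcast : (1:ℝ) / ((k:ℝ) + 1 + 1) = 1 / ((k:ℝ) + 2) := by ring_nf
  have hs2 := s.2
  linarith [hcast]

theorem shift_LE_self (f : QPath (SF F) (cuRelPW F)) (k : ℕ) :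
    QPath.LE (shiftSeq F f k) f := by
  intro t ht
  set d : ℝ := 1 / ((k:ℝ) + 1) with hd
  have hdpos : 0 < d := one_div_succ_pos k
  refine ⟨⟨(t.1 - d)/2, by linarith [t.2]⟩, by show (t.1 - d)/2 < 0; linarith [t.2], ?_⟩
  show cuRelPW F (f.toFun ⟨t.1 - d, _⟩) (f.toFun ⟨(t.1 - d)/2, _⟩)
  apply f.rel
  apply Subtype.coe_lt_coe.mp
  show t.1 - d < (t.1 - d)/2
  have := t.2
  linarith

theorem shift_isLUB (f : QPath (SF F) (cuRelPW F)) :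
    IsLUB (Set.range fun k => Tau.mk (shiftSeq F f k)) (Tau.mk f) := by
  constructor
  · rintro _ ⟨k, rfl⟩
    exact (mk_le_mk F).2 (shift_LE_self F f k)
  · intro b hb
    obtain ⟨h, rfl⟩ := tau_rep F b
    refine (mk_le_mk F).2 fun t ht => ?_
    obtain ⟨k, hk⟩ := exists_nat_one_div_lt (show (0:ℝ) < -t.1 by linarith)
    have hlt0 : t.1 + 1 / ((k:ℝ) + 1) < 0 := by linarith
    have hLE := (mk_le_mk F).1 (hb ⟨k, rfl⟩)
    obtain ⟨t', ht', hr⟩ := hLE ⟨t.1 + 1 / ((k:ℝ) + 1), le_of_lt hlt0⟩ hlt0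
    refine ⟨t', ht', ?_⟩
    have heq : (shiftSeq F f k).toFun ⟨t.1 + 1 / ((k:ℝ) + 1), le_of_lt hlt0⟩
        = f.toFun t := by
      show f.toFun _ = f.toFun t
      congr 1
      exact Subtype.ext (by show t.1 + 1 / ((k:ℝ) + 1) - 1 / ((k:ℝ) + 1) = t.1; ring)
    rwa [heq] at hr

theorem shiftSeq_mono (f : QPath (SF F) (cuRelPW F)) :
    Monotone fun k => Tau.mk (shiftSeq F f k) :=
  monotone_nat_of_le_succ fun k => (mk_le_mk F).2 (shift_strong F f k).toLE

theorem wayBelow_strong {f g : QPath (SF F) (cuRelPW F)}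
    (h : WayBelow (Tau.mk f) (Tau.mk g)) : Strong F f g := by
  obtain ⟨k, hk⟩ := h _ (shiftSeq_mono F g) _ (shift_isLUB F g) le_rfl
  have hLE := (mk_le_mk F).1 hk
  set d : ℝ := 1 / ((k:ℝ) + 1) with hd
  have hdpos : 0 < d := one_div_succ_pos k
  refine ⟨⟨-d, by linarith⟩, by show -d < 0; linarith, ?_⟩
  intro s hs
  obtain ⟨t', ht', hr⟩ := hLE s hs
  refine rmono F le_rfl hr (g.mono ?_)
  apply Subtype.coe_le_coe.mp
  show t'.1 - d ≤ -d
  linarith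

theorem tau_O2 : ∀ x : TauLim F, ∃ s : ℕ → TauLim F,
    (∀ n, WayBelow (s n) (s (n + 1))) ∧ IsLUB (Set.range s) x := by
  intro x
  obtain ⟨f, rfl⟩ := tau_rep F x
  exact ⟨fun k => Tau.mk (shiftSeq F f k),
    fun k => strong_wayBelow F (shift_strong F f k), shift_isLUB F f⟩

theorem tau_O3 : ∀ x' x y' y : TauLim F, WayBelow x' x → WayBelow y' y →
    WayBelow (x' + y') (x + y) := by
  intro x' x y' y h1 h2
  obtain ⟨f', rfl⟩ := tau_rep F x'
  obtain ⟨f, rfl⟩ := tau_rep F x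
  obtain ⟨g', rfl⟩ := tau_rep F y'
  obtain ⟨g, rfl⟩ := tau_rep F y
  obtain ⟨t1, ht1, hs1⟩ := wayBelow_strong F h1
  obtain ⟨t2, ht2, hs2⟩ := wayBelow_strong F h2
  rw [mk_add_mk, mk_add_mk]
  refine strong_wayBelow F ⟨pmax t1 t2, max_lt ht1 ht2, fun s hs => ?_⟩
  exact radd F (rmono F le_rfl (hs1 s hs) (f.mono (le_pmax_left t1 t2)))
    (rmono F le_rfl (hs2 s hs) (g.mono (le_pmax_right t1 t2)))

theorem LE_N {fs : ℕ → QPath (SF F) (cuRelPW F)}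
    (hfs : ∀ n, QPath.LE (fs n) (fs (n + 1))) {k N : ℕ} (hkN : k ≤ N)
    (u : PathDom) (hu : u.1 < 0) :
    ∃ w : PathDom, w.1 < 0 ∧ cuRelPW F ((fs k).toFun u) ((fs N).toFun w) := by
  rcases eq_or_lt_of_le hkN with h | h
  · subst h
    exact ⟨phalf u, phalf_neg hu, (fs k).rel (lt_phalf hu)⟩
  · obtain ⟨w, hw, hr⟩ := LE_chain F fs hfs (le_of_lt h) u hu
    exact ⟨w, hw, hr⟩

theorem tau_O4 : SeqSupAdditive (TauLim F) := by
  intro u v hu hv a b ha hb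
  obtain ⟨fsu, hru, hfu⟩ := seq_rep F u hu
  obtain ⟨fsv, hrv, hfv⟩ := seq_rep F v hv
  have hGa : a = Tau.mk (Gpath F fsu hfu) := by
    have h2 := sup_isLUB F fsu hfu
    have h3 : (fun n => Tau.mk (fsu n)) = u := funext fun n => (hru n).symm
    rw [h3] at h2
    exact ha.unique h2
  have hGb : b = Tau.mk (Gpath F fsv hfv) := by
    have h2 := sup_isLUB F fsv hfv
    have h3 : (fun n => Tau.mk (fsv n)) = v := funext fun n => (hrv n).symm
    rw [h3] at h2
    exact hb.unique h2
  constructor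
  · rintro _ ⟨n, rfl⟩
    show u n + v n ≤ a + b
    rw [hru n, hrv n, hGa, hGb, mk_add_mk, mk_add_mk]
    exact (mk_le_mk F).2 (LE_add F (LE_fs_Gpath F fsu hfu n) (LE_fs_Gpath F fsv hfv n))
  · intro c hc
    obtain ⟨h, rfl⟩ := tau_rep F c
    rw [hGa, hGb, mk_add_mk]
    refine (mk_le_mk F).2 fun t ht => ?_
    obtain ⟨k1, u1, hu1, hle1⟩ := Gpath_bound F fsu hfu t ht
    obtain ⟨k2, u2, hu2, hle2⟩ := Gpath_bound F fsv hfv t ht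
    obtain ⟨w1, hw1, hr1⟩ := LE_N F hfu (le_max_left k1 k2) u1 hu1
    obtain ⟨w2, hw2, hr2⟩ := LE_N F hfv (le_max_right k1 k2) u2 hu2
    have hcN : u (max k1 k2) + v (max k1 k2) ≤ Tau.mk h := hc ⟨max k1 k2, rfl⟩
    rw [hru (max k1 k2), hrv (max k1 k2), mk_add_mk] at hcN
    have hNle := (mk_le_mk F).1 hcN
    obtain ⟨t', ht', hr3⟩ := hNle (pmax w1 w2) (max_lt hw1 hw2)
    refine ⟨t', ht', ?_⟩
    have hA : cuRelPW F ((pAdd F (Gpath F fsu hfu) (Gpath F fsv hfv)).toFun t)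
        ((pAdd F (fsu (max k1 k2)) (fsv (max k1 k2))).toFun (pmax w1 w2)) := by
      rw [pAdd_apply, pAdd_apply]
      exact radd F
        (rmono F hle1 hr1 ((fsu (max k1 k2)).mono (le_pmax_left w1 w2)))
        (rmono F hle2 hr2 ((fsv (max k1 k2)).mono (le_pmax_right w1 w2)))
    exact rtrans F hA hr3

theorem tau_pom : PoMAxioms (TauLim F) where
  add_le_add_left a b hab c := by
    obtain ⟨f, rfl⟩ := tau_rep F a
    obtain ⟨g, rfl⟩ := tau_rep F b
    obtain ⟨h, rfl⟩ := tau_rep F c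
    rw [mk_add_mk, mk_add_mk]
    exact (mk_le_mk F).2 (LE_add F (QPath.LE.refl h) ((mk_le_mk F).1 hab))
  zero_le a := by
    obtain ⟨f, rfl⟩ := tau_rep F a
    rw [tau_zero_eq]
    exact (mk_le_mk F).2 fun t ht => ⟨phalf t, phalf_neg ht, rzero F _⟩

theorem tau_cu : CuAxioms (TauLim F) :=
  { tau_pom F with
    O1 := tau_O1 F
    O2 := tau_O2 F
    O3 := tau_O3 F
    O4 := tau_O4 F }

end TauCu


/-! ### The endpoint morphisms `ψ i : τ(S) → F i` -/

section Psi

variable {I : Type u} [CategoryTheory.SmallCategory I] (F : I ⥤ CuCat.{u})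

attribute [local instance] tauACM tauPO

theorem endpoint_le {f g : QPath (SF F) (cuRelPW F)} (h : QPath.LE f g) :
    f.toFun ⟨0, le_refl 0⟩ ≤ g.toFun ⟨0, le_refl 0⟩ := by
  refine (f.lub ⟨0, le_refl 0⟩).2 ?_
  rintro _ ⟨s, hs, rfl⟩
  have hs0 : s.1 < 0 := hs
  obtain ⟨t', ht', hr⟩ := h s hs0
  exact le_trans (rle F hr) (g.mono (Subtype.coe_le_coe.mp (le_of_lt ht')))

/-- The endpoint map `τ(S) → S`. -/
noncomputable def eP : TauLim F → SF F :=
  Quot.lift (fun f => f.toFun ⟨0, le_refl 0⟩)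
    (fun _ _ h => le_antisymm (endpoint_le F h.1) (endpoint_le F h.2))

theorem eP_mk (f : QPath (SF F) (cuRelPW F)) :
    eP F (Tau.mk f) = f.toFun ⟨0, le_refl 0⟩ := rfl

theorem eP_mono : Monotone (eP F) := by
  intro x y h
  obtain ⟨f, rfl⟩ := tau_rep F x
  obtain ⟨g, rfl⟩ := tau_rep F y
  exact endpoint_le F ((mk_le_mk F).1 h)

theorem eP_add (x y : TauLim F) : eP F (x + y) = eP F x + eP F y := by
  obtain ⟨f, rfl⟩ := tau_rep F x
  obtain ⟨g, rfl⟩ := tau_rep F y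
  rw [mk_add_mk]
  rfl

theorem eP_zero : eP F 0 = 0 := rfl

theorem eP_rel {x y : TauLim F} (h : WayBelow x y) : cuRelPW F (eP F x) (eP F y) := by
  obtain ⟨f, rfl⟩ := tau_rep F x
  obtain ⟨g, rfl⟩ := tau_rep F y
  obtain ⟨t0, ht0, hs⟩ := wayBelow_strong F h
  have h1 : f.toFun ⟨0, le_refl 0⟩ ≤ g.toFun t0 := by
    refine (f.lub ⟨0, le_refl 0⟩).2 ?_
    rintro _ ⟨s, hsy, rfl⟩
    exact rle F (hs s hsy)
  exact rmono F h1 (g.rel (lt_phalf ht0)) (g.mono (Subtype.coe_le_coe.mp (phalf t0).2))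

theorem eP_isLUB {un : ℕ → TauLim F} (hu : Monotone un) {a : TauLim F}
    (ha : IsLUB (Set.range un) a) :
    IsLUB (Set.range fun n => eP F (un n)) (eP F a) := by
  obtain ⟨fs, hrep, hfs⟩ := seq_rep F un hu
  have hG : a = Tau.mk (Gpath F fs hfs) := by
    have h2 := sup_isLUB F fs hfs
    have h3 : (fun n => Tau.mk (fs n)) = un := funext fun n => (hrep n).symm
    rw [h3] at h2
    exact ha.unique h2
  have key : IsLUB (Set.range fun n => (fs n).toFun ⟨0, le_refl 0⟩)
      ((Gpath F fs hfs).toFun ⟨0, le_refl 0⟩) := by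
    constructor
    · rintro _ ⟨n, rfl⟩
      exact endpoint_le F (LE_fs_Gpath F fs hfs n)
    · intro b hb
      refine ((Gpath F fs hfs).lub ⟨0, le_refl 0⟩).2 ?_
      rintro _ ⟨s, hsy, rfl⟩
      obtain ⟨k, uu, huu, hle⟩ := Gpath_bound F fs hfs s hsy
      have h5 : uu ≤ (⟨0, le_refl 0⟩ : PathDom) := by
        rw [← Subtype.coe_le_coe]; exact uu.2
      exact le_trans hle (le_trans ((fs k).mono h5) (hb ⟨k, rfl⟩))
  have h4 : (fun n => eP F (un n)) = fun n => (fs n).toFun ⟨0, le_refl 0⟩ :=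
    funext fun n => by rw [hrep n, eP_mk]
  rw [h4, hG, eP_mk]
  exact key

/-- The limit cone legs `ψ i`. -/
noncomputable def psi (i : I) : TauLim F → (F.obj i).carrier := fun x => (eP F x).1 i

theorem psi_mk (i : I) (f : QPath (SF F) (cuRelPW F)) :
    psi F i (Tau.mk f) = (f.toFun ⟨0, le_refl 0⟩).1 i := rfl

theorem psi_compat (i j : I) (g : i ⟶ j) (x : TauLim F) :
    (F.map g).1 (psi F i x) = psi F j x := (eP F x).2 i j g

theorem psi_hom (i : I) : IsCuHom (psi F i) := by
  refine ⟨⟨rfl, ?_, ?_⟩, ?_, ?_⟩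
  · intro x y
    show (eP F (x + y)).1 i = (eP F x).1 i + (eP F y).1 i
    rw [eP_add, Sadd_apply]
  · intro x y h
    exact (Sle_iff F).1 (eP_mono F h) i
  · intro x y h
    exact eP_rel F h i
  · intro s hs a ha
    have h1 := S_isLUB_components F ((eP_mono F).comp hs) (eP_isLUB F hs ha) i
    exact h1

end Psi


/-! ### Every element of a Cu-semigroup is the endpoint of a path -/

section TPath

variable {T : Type u} [AddCommMonoid T] [PartialOrder T] (hT : CuAxioms T)

include hT

theorem wayBelow_zero' (y : T) : WayBelow (0 : T) y := fun _ _ _ _ _ => ⟨0, hT.zero_le _⟩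

theorem interp_ex {a b : T} (h : WayBelow a b) : ∃ c, WayBelow a c ∧ WayBelow c b := by
  obtain ⟨s, hs, hlub⟩ := hT.O2 b
  have hmono : Monotone s := monotone_nat_of_le_succ fun n => (hs n).le
  obtain ⟨n, hn⟩ := h s hmono b hlub le_rfl
  exact ⟨s (n+1), (hs n).mono hn le_rfl, (hs (n+1)).mono le_rfl (hlub.1 ⟨n+2, rfl⟩)⟩

open Classical in
noncomputable def interpC (a b : T) : T :=
  if h : WayBelow a b then (interp_ex hT h).choose else b

open Classical in
theorem interpC_spec {a b : T} (h : WayBelow a b) :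
    WayBelow a (interpC hT a b) ∧ WayBelow (interpC hT a b) b := by
  rw [interpC, dif_pos h]
  exact (interp_ex hT h).choose_spec

variable (Z : ℕ → T) (hZ : ∀ j, WayBelow (Z j) (Z (j + 1)))

/-- The dyadic grid interpolating the chain `Z`. -/
noncomputable def WT : ℕ → ℕ → T
  | 0, k => if k = 1 then Z 1 else 0
  | (n+1), k =>
    if k % 2 = 0 then WT n (k / 2)
    else if k = 1 then Z (n + 2)
    else interpC hT (WT n ((k + 1) / 2)) (WT n ((k - 1) / 2))

theorem WT_one (n : ℕ) : WT hT Z n 1 = Z (n + 1) := by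
  cases n with
  | zero => simp [WT]
  | succ n => simp [WT]

theorem WT_compat (n k : ℕ) (hk : 1 ≤ k) :
    WT hT Z (n + 1) (2 * k) = WT hT Z n k := by
  simp only [WT]
  rw [if_pos (Nat.mul_mod_right 2 k)]
  congr 1
  omega

include hZ in
theorem WT_inv (n : ℕ) : ∀ k, 1 ≤ k → WayBelow (WT hT Z n (k + 1)) (WT hT Z n k) := by
  induction n with
  | zero =>
    intro k hk
    rcases eq_or_lt_of_le hk with h | h
    · rw [← h]
      have e1 : WT hT Z 0 2 = 0 := by simp [WT]
      have e2 : WT hT Z 0 1 = Z 1 := by simp [WT]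
      rw [e1, e2]
      exact wayBelow_zero' hT _
    · have e1 : WT hT Z 0 (k + 1) = 0 := by
        simp only [WT]
        rw [if_neg (by omega)]
      have e2 : WT hT Z 0 k = 0 := by
        simp only [WT]
        rw [if_neg (by omega)]
      rw [e1, e2]
      exact wayBelow_zero' hT _
  | succ n ih =>
    intro k hk
    by_cases hpar : k % 2 = 0
    · obtain ⟨m, rfl⟩ : ∃ m, k = 2 * m := ⟨k / 2, by omega⟩
      have hm1 : 1 ≤ m := by omega
      have e1 : WT hT Z (n+1) (2*m + 1) =
          interpC hT (WT hT Z n (m + 1)) (WT hT Z n m) := by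
        simp only [WT]
        rw [if_neg (by omega), if_neg (by omega)]
        congr 1
        · congr 1; omega
        · congr 1; omega
      have e2 : WT hT Z (n+1) (2*m) = WT hT Z n m := WT_compat hT Z n m hm1
      rw [e1, e2]
      exact (interpC_spec hT (ih m hm1)).2
    · obtain ⟨m, rfl⟩ : ∃ m, k = 2 * m + 1 := ⟨k / 2, by omega⟩
      have e2 : WT hT Z (n+1) (2*m + 1 + 1) = WT hT Z n (m + 1) := by
        have h3 := WT_compat hT Z n (m + 1) (by omega)
        rwa [show 2 * (m + 1) = 2*m + 1 + 1 from by ring] at h3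
      rcases Nat.eq_zero_or_pos m with rfl | hm
      · have e3 : WT hT Z (n+1) (2*0 + 1) = Z (n + 2) := by
          norm_num
          rw [WT_one]
        rw [e2, e3, WT_one]
        exact hZ (n + 1)
      · have e1 : WT hT Z (n+1) (2*m + 1) =
            interpC hT (WT hT Z n (m + 1)) (WT hT Z n m) := by
          simp only [WT]
          rw [if_neg (by omega), if_neg (by omega)]
          congr 1
          · congr 1; omega
          · congr 1; omega
        rw [e1, e2]
        exact (interpC_spec hT (ih m hm)).1

include hZ in
theorem WT_chain (n : ℕ) {j k : ℕ} (hj : 1 ≤ j) (hjk : j < k) :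
    WayBelow (WT hT Z n k) (WT hT Z n j) := by
  induction k with
  | zero => omega
  | succ k ih =>
    rcases Nat.lt_or_ge j k with h | h
    · exact (WT_inv hT Z hZ n k (by omega)).mono le_rfl (ih h).le
    · have : j = k := by omega
      subst this
      exact WT_inv hT Z hZ n j hj

theorem WT_lift (p n k : ℕ) (hk : 1 ≤ k) :
    WT hT Z (n + p) (k * 2 ^ p) = WT hT Z n k := by
  induction p with
  | zero => rw [pow_zero, mul_one]; rfl
  | succ p ih =>
    have h1 : k * 2 ^ (p + 1) = 2 * (k * 2 ^ p) := by ring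
    have h2 : 1 ≤ k * 2 ^ p := Nat.one_le_iff_ne_zero.mpr (by positivity)
    rw [show n + (p+1) = (n + p) + 1 from rfl, h1, WT_compat hT Z (n+p) _ h2, ih]

include hZ in
theorem WT_rel (n m k j : ℕ) (hk : 1 ≤ k) (hj : 1 ≤ j)
    (h : (j : ℝ) / 2 ^ m < (k : ℝ) / 2 ^ n) :
    WayBelow (WT hT Z n k) (WT hT Z m j) := by
  have hnat : j * 2 ^ n < k * 2 ^ m := by
    rw [div_lt_div_iff₀ (by positivity) (by positivity)] at h
    exact_mod_cast h
  have e1 : WT hT Z (n + m) (k * 2 ^ m) = WT hT Z n k := WT_lift hT Z m n k hk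
  have e2 : WT hT Z (n + m) (j * 2 ^ n) = WT hT Z m j := by
    rw [Nat.add_comm n m]
    exact WT_lift hT Z n m j hj
  rw [← e1, ← e2]
  exact WT_chain hT Z hZ (n + m) (Nat.one_le_iff_ne_zero.mpr (by positivity)) hnat

/-- The path through the chain `Z`. -/
noncomputable def pathT : QPath T WayBelow :=
  gridPath hT.O1 (fun h => h.le) (fun h1 h2 => h2.mono h1 le_rfl)
    (fun h1 h2 => h1.mono le_rfl h2)
    (WT hT Z) (WT_compat hT Z) (WT_rel hT Z hZ)

theorem pathT_endpoint {x : T} (hZ0 : Z 0 = 0) (hx : IsLUB (Set.range Z) x) :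
    (pathT hT Z hZ).toFun ⟨0, le_refl 0⟩ = x := by
  have h1 := gridPath_zero_isLUB hT.O1 (fun h => h.le) (fun h1 h2 => h2.mono h1 le_rfl)
    (fun h1 h2 => h1.mono le_rfl h2) (WT hT Z) (WT_compat hT Z) (WT_rel hT Z hZ)
  have h2 : (fun n => WT hT Z n 1) = fun n => Z (n + 1) := funext fun n => WT_one hT Z n
  rw [h2] at h1
  refine h1.unique ?_
  constructor
  · rintro _ ⟨n, rfl⟩
    exact hx.1 ⟨n + 1, rfl⟩
  · intro b hb
    refine hx.2 ?_
    rintro _ ⟨j, rfl⟩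
    cases j with
    | zero =>
      rw [hZ0]
      exact le_trans (hT.zero_le (Z 1)) (hb ⟨0, rfl⟩)
    | succ j => exact hb ⟨j, rfl⟩

theorem exists_pathT (x : T) :
    ∃ p : QPath T WayBelow, p.toFun ⟨0, le_refl 0⟩ = x := by
  obtain ⟨zs, hzs, hzl⟩ := hT.O2 x
  set Z : ℕ → T := fun j => Nat.rec (0 : T) (fun j _ => zs j) j with hZdef
  have hZ0 : Z 0 = 0 := rfl
  have hZ : ∀ j, WayBelow (Z j) (Z (j + 1)) := by
    intro j
    cases j with
    | zero => exact wayBelow_zero' hT _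
    | succ j => exact hzs j
  have hx : IsLUB (Set.range Z) x := by
    constructor
    · rintro _ ⟨j, rfl⟩
      cases j with
      | zero => exact hT.zero_le x
      | succ j => exact hzl.1 ⟨j, rfl⟩
    · intro b hb
      exact hzl.2 (by rintro _ ⟨j, rfl⟩; exact hb ⟨j + 1, rfl⟩)
  exact ⟨pathT hT Z hZ, pathT_endpoint hT Z hZ hZ0 hx⟩

end TPath


/-! ### The universal property -/

section Alpha

variable {I : Type u} [CategoryTheory.SmallCategory I] (F : I ⥤ CuCat.{u})
variable {T : Type u} [AddCommMonoid T] [PartialOrder T] (hT : CuAxioms T)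
variable (σ : ∀ i : I, T → (F.obj i).carrier)
variable (hσ : ∀ i, IsCuHom (σ i))
variable (hcomp : ∀ (i j : I) (g : i ⟶ j) (x : T), (F.map g).1 (σ i x) = σ j x)

attribute [local instance] tauACM tauPO

theorem tseq0_neg (n : ℕ) : (tseq ⟨0, le_refl 0⟩ n).1 < 0 := by
  show (0:ℝ) - 1 / ((n:ℝ) + 1) < 0
  have := one_div_succ_pos n
  linarith

include hT in
theorem Tadd_le_add {a b c d : T} (h : a ≤ b) (h' : c ≤ d) : a + c ≤ b + d := by
  calc a + c ≤ a + d := hT.add_le_add_left c d h' a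
    _ = d + a := add_comm _ _
    _ ≤ d + b := hT.add_le_add_left a b h d
    _ = b + d := add_comm _ _

/-- Addition of paths in `T`. -/
noncomputable def pAddT (f g : QPath T WayBelow) : QPath T WayBelow where
  toFun t := f.toFun t + g.toFun t
  mono _ _ h := Tadd_le_add hT (f.mono h) (g.mono h)
  lub t := by
    have h4 := hT.O4 _ _ (f.mono.comp (tseq_mono t)) (g.mono.comp (tseq_mono t)) _ _
      (path_csl f t) (path_csl g t)
    constructor
    · rintro _ ⟨s, hs, rfl⟩
      exact Tadd_le_add hT (f.mono (le_of_lt hs)) (g.mono (le_of_lt hs))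
    · intro b hb
      exact h4.2 (by rintro _ ⟨n, rfl⟩; exact hb ⟨tseq t n, tseq_lt t n, rfl⟩)
  rel _ _ h := hT.O3 _ _ _ _ (f.rel h) (g.rel h)

/-- The induced map `T → S` into the limit of `F` in `Q`. -/
noncomputable def sig : T → SF F := fun x => ⟨fun i => σ i x, fun i j g => hcomp i j g x⟩

theorem sig_apply (x : T) (i : I) : (sig F σ hcomp x).1 i = σ i x := rfl

include hσ in
theorem sig_mono : Monotone (sig F σ hcomp) := fun _ _ h =>
  (Sle_iff F).2 fun i => (hσ i).mono h

include hσ in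
theorem sig_add (x y : T) :
    sig F σ hcomp (x + y) = sig F σ hcomp x + sig F σ hcomp y := by
  refine Subtype.ext (funext fun i => ?_)
  exact (hσ i).map_add x y

include hσ in
theorem sig_zero : sig F σ hcomp 0 = 0 := by
  refine Subtype.ext (funext fun i => ?_)
  exact (hσ i).map_zero

include hσ in
theorem sig_rel {x y : T} (h : WayBelow x y) :
    cuRelPW F (sig F σ hcomp x) (sig F σ hcomp y) :=
  fun i => (hσ i).map_wayBelow _ _ h

include hσ in
theorem sig_isLUB {s : ℕ → T} (hs : Monotone s) {a : T} (ha : IsLUB (Set.range s) a) :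
    IsLUB (Set.range fun n => sig F σ hcomp (s n)) (sig F σ hcomp a) :=
  S_isLUB_of_components F fun i => (hσ i).map_seqSup s hs a ha

/-- Pushforward of a `T`-path along `σ̂`. -/
noncomputable def pushP (p : QPath T WayBelow) : QPath (SF F) (cuRelPW F) where
  toFun t := sig F σ hcomp (p.toFun t)
  mono _ _ h := sig_mono F σ hσ hcomp (p.mono h)
  rel _ _ h := sig_rel F σ hσ hcomp (p.rel h)
  lub t := by
    have h2 := sig_isLUB F σ hσ hcomp (p.mono.comp (tseq_mono t)) (path_csl p t)
    constructor
    · rintro _ ⟨s, hs, rfl⟩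
      exact sig_mono F σ hσ hcomp (p.mono (le_of_lt hs))
    · intro b hb
      exact h2.2 (by rintro _ ⟨n, rfl⟩; exact hb ⟨tseq t n, tseq_lt t n, rfl⟩)

theorem pushP_apply (p : QPath T WayBelow) (t : PathDom) :
    (pushP F σ hσ hcomp p).toFun t = sig F σ hcomp (p.toFun t) := rfl

include hσ in
theorem pushP_LE {p q : QPath T WayBelow} (h : QPath.LE p q) :
    QPath.LE (pushP F σ hσ hcomp p) (pushP F σ hσ hcomp q) := by
  intro t ht
  obtain ⟨t', ht', hr⟩ := h t ht
  exact ⟨t', ht', sig_rel F σ hσ hcomp hr⟩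

theorem Tpath_LE_of_endpoint_le {p q : QPath T WayBelow}
    (h : p.toFun ⟨0, le_refl 0⟩ ≤ q.toFun ⟨0, le_refl 0⟩) : QPath.LE p q := by
  intro t ht
  have hw : WayBelow (p.toFun t) (p.toFun (phalf t)) := p.rel (lt_phalf ht)
  have hle : p.toFun (phalf t) ≤ q.toFun ⟨0, le_refl 0⟩ := by
    refine le_trans (p.mono ?_) h
    rw [← Subtype.coe_le_coe]
    exact (phalf t).2
  obtain ⟨n, hn⟩ := hw _ (q.mono.comp (tseq_mono ⟨0, le_refl 0⟩)) _
    (path_csl q ⟨0, le_refl 0⟩) hle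
  refine ⟨phalf (tseq ⟨0, le_refl 0⟩ n), phalf_neg (tseq0_neg n), ?_⟩
  exact (q.rel (lt_phalf (tseq0_neg n))).mono hn le_rfl

/-- The path attached to `x : T` by choice. -/
noncomputable def xpath (x : T) : QPath T WayBelow := (exists_pathT hT x).choose

theorem xpath_endpoint (x : T) : (xpath hT x).toFun ⟨0, le_refl 0⟩ = x :=
  (exists_pathT hT x).choose_spec

/-- The universal morphism `α : T → τ(S)`. -/
noncomputable def alph : T → TauLim F := fun x =>
  Tau.mk (pushP F σ hσ hcomp (xpath hT x))

theorem alph_endpoint (x : T) : eP F (alph F hT σ hσ hcomp x) = sig F σ hcomp x := by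
  rw [alph, eP_mk, pushP_apply, xpath_endpoint]

theorem psi_alph (i : I) (x : T) : psi F i (alph F hT σ hσ hcomp x) = σ i x := by
  rw [psi, alph_endpoint, sig_apply]

theorem alph_mono : Monotone (alph F hT σ hσ hcomp) := by
  intro x y h
  refine (mk_le_mk F).2 (pushP_LE F σ hσ hcomp (Tpath_LE_of_endpoint_le ?_))
  rw [xpath_endpoint, xpath_endpoint]
  exact h

theorem alph_mk_eq {p : QPath T WayBelow} {x : T} (hp : p.toFun ⟨0, le_refl 0⟩ = x) :
    Tau.mk (pushP F σ hσ hcomp p) = alph F hT σ hσ hcomp x := by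
  have h1 : QPath.LE p (xpath hT x) :=
    Tpath_LE_of_endpoint_le (by rw [hp, xpath_endpoint])
  have h2 : QPath.LE (xpath hT x) p :=
    Tpath_LE_of_endpoint_le (by rw [hp, xpath_endpoint])
  exact Quot.sound ⟨pushP_LE F σ hσ hcomp h1, pushP_LE F σ hσ hcomp h2⟩

theorem alph_zero : alph F hT σ hσ hcomp 0 = 0 := by
  rw [tau_zero_eq]
  refine ((alph_mk_eq F hT σ hσ hcomp (p := xpath hT 0) (xpath_endpoint hT 0)).symm).trans ?_
  refine Quot.sound ⟨?_, ?_⟩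
  · intro t ht
    refine ⟨phalf t, phalf_neg ht, ?_⟩
    have hz : (xpath hT 0).toFun t = 0 := by
      refine le_antisymm ?_ (hT.zero_le _)
      have := (xpath hT 0).mono (show t ≤ ⟨0, le_refl 0⟩ by
        rw [← Subtype.coe_le_coe]; exact t.2)
      rwa [xpath_endpoint] at this
    rw [pushP_apply, hz, sig_zero F σ hσ hcomp]
    exact rzero F _
  · intro t ht
    exact ⟨phalf t, phalf_neg ht, rzero F _⟩

theorem alph_add (x y : T) :
    alph F hT σ hσ hcomp (x + y) = alph F hT σ hσ hcomp x + alph F hT σ hσ hcomp y := by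
  have hend : (pAddT hT (xpath hT x) (xpath hT y)).toFun ⟨0, le_refl 0⟩ = x + y := by
    show (xpath hT x).toFun _ + (xpath hT y).toFun _ = x + y
    rw [xpath_endpoint, xpath_endpoint]
  rw [← alph_mk_eq F hT σ hσ hcomp hend, alph, alph, mk_add_mk]
  congr 1
  refine QPath.ext' fun t => ?_
  rw [pushP_apply, pAdd_apply, pushP_apply, pushP_apply]
  show sig F σ hcomp (_ + _) = _
  rw [sig_add F σ hσ hcomp]

theorem alph_wayBelow {x y : T} (h : WayBelow x y) :
    WayBelow (alph F hT σ hσ hcomp x) (alph F hT σ hσ hcomp y) := by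
  have hy : IsLUB (Set.range fun n => (xpath hT y).toFun (tseq ⟨0, le_refl 0⟩ n)) y := by
    have := path_csl (xpath hT y) ⟨0, le_refl 0⟩
    rwa [xpath_endpoint] at this
  obtain ⟨n, hn⟩ := h _ ((xpath hT y).mono.comp (tseq_mono ⟨0, le_refl 0⟩)) y hy le_rfl
  refine strong_wayBelow F ⟨phalf (tseq ⟨0, le_refl 0⟩ n), phalf_neg (tseq0_neg n),
    fun s hs => ?_⟩
  rw [pushP_apply, pushP_apply]
  refine sig_rel F σ hσ hcomp ?_
  have h1 : (xpath hT x).toFun s ≤ x := by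
    have := (xpath hT x).mono (show s ≤ ⟨0, le_refl 0⟩ by
      rw [← Subtype.coe_le_coe]; exact s.2)
    rwa [xpath_endpoint] at this
  exact ((xpath hT y).rel (lt_phalf (tseq0_neg n))).mono (le_trans h1 hn) le_rfl

theorem alph_seqSup : PreservesSeqSup (alph F hT σ hσ hcomp) := by
  intro s hs a ha
  constructor
  · rintro _ ⟨n, rfl⟩
    exact alph_mono F hT σ hσ hcomp (ha.1 ⟨n, rfl⟩)
  · intro b hb
    obtain ⟨h, rfl⟩ := tau_rep F b
    refine (mk_le_mk F).2 fun t ht => ?_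
    set tm := phalf t with htm
    have htm0 : tm.1 < 0 := phalf_neg ht
    -- step 1: catch `xpath a tm ≤ s n`.
    have hw : WayBelow ((xpath hT a).toFun tm) ((xpath hT a).toFun (phalf tm)) :=
      (xpath hT a).rel (lt_phalf htm0)
    have hle : (xpath hT a).toFun (phalf tm) ≤ a := by
      have h1 := (xpath hT a).mono (show phalf tm ≤ ⟨0, le_refl 0⟩ by
        rw [← Subtype.coe_le_coe]; exact (phalf tm).2)
      rwa [xpath_endpoint] at h1
    obtain ⟨n, hn⟩ := hw s hs a ha hle
    -- step 2: catch `xpath a t` below a path point of `xpath (s n)`.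
    have hwt : WayBelow ((xpath hT a).toFun t) (s n) :=
      ((xpath hT a).rel (lt_phalf ht)).mono le_rfl hn
    have hsn : IsLUB (Set.range fun m => (xpath hT (s n)).toFun (tseq ⟨0, le_refl 0⟩ m))
        (s n) := by
      have h1 := path_csl (xpath hT (s n)) ⟨0, le_refl 0⟩
      rwa [xpath_endpoint] at h1
    obtain ⟨m, hm⟩ := hwt _ ((xpath hT (s n)).mono.comp (tseq_mono ⟨0, le_refl 0⟩))
      (s n) hsn le_rfl
    set u := tseq ⟨0, le_refl 0⟩ m with hu
    have hu0 : u.1 < 0 := tseq0_neg m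
    -- step 3: use `alph (s n) ≤ mk h`.
    have hLE : QPath.LE (pushP F σ hσ hcomp (xpath hT (s n))) h :=
      (mk_le_mk F).1 (hb ⟨n, rfl⟩)
    obtain ⟨t', ht', hr⟩ := hLE (phalf u) (phalf_neg hu0)
    refine ⟨t', ht', ?_⟩
    have hchain : cuRelPW F (sig F σ hcomp ((xpath hT (s n)).toFun u)) (h.toFun t') :=
      rtrans F (sig_rel F σ hσ hcomp ((xpath hT (s n)).rel (lt_phalf hu0))) hr
    exact rmono F (sig_mono F σ hσ hcomp hm) hchain le_rfl

theorem alph_isCuHom : IsCuHom (alph F hT σ hσ hcomp) :=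
  ⟨⟨alph_zero F hT σ hσ hcomp, alph_add F hT σ hσ hcomp, alph_mono F hT σ hσ hcomp⟩,
    fun _ _ h => alph_wayBelow F hT σ hσ hcomp h, alph_seqSup F hT σ hσ hcomp⟩

theorem endpoint_beta {β : T → TauLim F}
    (hψ : ∀ (i : I) (x : T), psi F i (β x) = σ i x) (z : T) :
    eP F (β z) = sig F σ hcomp z :=
  Subtype.ext (funext fun i => hψ i z)

theorem shift_strong_self (h : QPath (SF F) (cuRelPW F)) (k : ℕ) :
    Strong F (shiftSeq F h k) h := by
  set d : ℝ := 1 / ((k:ℝ) + 1) with hd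
  have hdpos : 0 < d := one_div_succ_pos k
  refine ⟨⟨-d/2, by linarith⟩, by show -d/2 < 0; linarith, fun s hs => ?_⟩
  refine h.rel (Subtype.mk_lt_mk.2 ?_)
  show s.1 - d < -d/2
  linarith

theorem alph_le_beta {β : T → TauLim F} (hβ : IsCuHom β)
    (hψ : ∀ (i : I) (x : T), psi F i (β x) = σ i x) (x : T) :
    alph F hT σ hσ hcomp x ≤ β x := by
  obtain ⟨h, hh⟩ := tau_rep F (β x)
  rw [hh]
  refine (mk_le_mk F).2 fun t' ht' => ?_
  set t := phalf t' with htdef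
  have ht : t.1 < 0 := phalf_neg ht'
  set z := (xpath hT x).toFun t with hz
  have hzx : WayBelow z x := by
    have h1 : (xpath hT x).toFun (phalf t) ≤ x := by
      have h2 := (xpath hT x).mono (show phalf t ≤ ⟨0, le_refl 0⟩ by
        rw [← Subtype.coe_le_coe]; exact (phalf t).2)
      rwa [xpath_endpoint] at h2
    exact ((xpath hT x).rel (lt_phalf ht)).mono le_rfl h1
  have hwb : WayBelow (β z) (β x) := hβ.map_wayBelow _ _ hzx
  obtain ⟨hz2, hz2eq⟩ := tau_rep F (β z)
  rw [hz2eq, hh] at hwb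
  obtain ⟨u0, hu0, hstr⟩ := wayBelow_strong F hwb
  have hend : sig F σ hcomp z ≤ h.toFun u0 := by
    have h1 : eP F (β z) ≤ h.toFun u0 := by
      rw [hz2eq, eP_mk]
      refine (hz2.lub ⟨0, le_refl 0⟩).2 ?_
      rintro _ ⟨w, hw, rfl⟩
      exact rle F (hstr w hw)
    rwa [endpoint_beta F σ hcomp hψ z] at h1
  refine ⟨u0, hu0, ?_⟩
  exact rmono F le_rfl (sig_rel F σ hσ hcomp ((xpath hT x).rel (lt_phalf ht'))) hend

theorem beta_le_alph {β : T → TauLim F} (hβ : IsCuHom β)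
    (hψ : ∀ (i : I) (x : T), psi F i (β x) = σ i x) (x : T) :
    β x ≤ alph F hT σ hσ hcomp x := by
  obtain ⟨h, hh⟩ := tau_rep F (β x)
  rw [hh]
  refine (mk_le_mk F).2 fun t ht => ?_
  -- β x is the sup of β over the canonical approximations of x
  have hxl : IsLUB (Set.range fun m => (xpath hT x).toFun (tseq ⟨0, le_refl 0⟩ m)) x := by
    have h1 := path_csl (xpath hT x) ⟨0, le_refl 0⟩
    rwa [xpath_endpoint] at h1
  have hlub2 := hβ.map_seqSup _ ((xpath hT x).mono.comp (tseq_mono ⟨0, le_refl 0⟩)) x hxl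
  obtain ⟨k, hk⟩ := exists_nat_one_div_lt (show (0:ℝ) < -t.1 by linarith)
  have hwb : WayBelow (Tau.mk (shiftSeq F h k)) (β x) := by
    rw [hh]
    exact strong_wayBelow F (shift_strong_self F h k)
  have hmono2 : Monotone (fun m => β ((xpath hT x).toFun (tseq ⟨0, le_refl 0⟩ m))) :=
    fun p q hpq => hβ.mono ((xpath hT x).mono (tseq_mono _ hpq))
  have hlub2' : IsLUB (Set.range fun m => β ((xpath hT x).toFun (tseq ⟨0, le_refl 0⟩ m)))
      (β x) := hlub2
  obtain ⟨m, hm0⟩ := hwb _ hmono2 _ hlub2' le_rfl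
  have hm : Tau.mk (shiftSeq F h k) ≤ β ((xpath hT x).toFun (tseq ⟨0, le_refl 0⟩ m)) := hm0
  obtain ⟨h2, hh2⟩ := tau_rep F (β ((xpath hT x).toFun (tseq ⟨0, le_refl 0⟩ m)))
  rw [hh2] at hm
  have hLE2 := (mk_le_mk F).1 hm
  have hlt0 : t.1 + 1 / ((k:ℝ) + 1) < 0 := by linarith
  obtain ⟨t', ht', hr⟩ := hLE2 ⟨t.1 + 1 / ((k:ℝ) + 1), le_of_lt hlt0⟩ hlt0
  have heq : (shiftSeq F h k).toFun ⟨t.1 + 1 / ((k:ℝ) + 1), le_of_lt hlt0⟩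
      = h.toFun t := by
    show h.toFun _ = h.toFun t
    congr 1
    exact Subtype.ext (by show t.1 + 1 / ((k:ℝ) + 1) - 1 / ((k:ℝ) + 1) = t.1; ring)
  rw [heq] at hr
  -- now h t ≺ h2 t' ≤ h2 0 = sig (xpath x (tseq m)) = pushP (xpath x) (tseq m)
  have hend : h2.toFun ⟨0, le_refl 0⟩ =
      sig F σ hcomp ((xpath hT x).toFun (tseq ⟨0, le_refl 0⟩ m)) := by
    have h3 := endpoint_beta F σ hcomp hψ ((xpath hT x).toFun (tseq ⟨0, le_refl 0⟩ m))
    rw [hh2, eP_mk] at h3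
    exact h3
  refine ⟨tseq ⟨0, le_refl 0⟩ m, tseq0_neg m, ?_⟩
  have hfin : h2.toFun t' ≤ (pushP F σ hσ hcomp (xpath hT x)).toFun
      (tseq ⟨0, le_refl 0⟩ m) := by
    rw [pushP_apply, ← hend]
    exact h2.mono (by rw [← Subtype.coe_le_coe]; exact t'.2)
  exact rmono F le_rfl hr hfin

theorem alph_eq_of {β : T → TauLim F} (hβ : IsCuHom β)
    (hψ : ∀ (i : I) (x : T), psi F i (β x) = σ i x) :
    β = alph F hT σ hσ hcomp :=
  funext fun x => le_antisymm (beta_le_alph F hT σ hσ hcomp hβ hψ x)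
    (alph_le_beta F hT σ hσ hcomp hβ hψ x)

end Alpha


/-! ### The limit cone in `Cu` -/

section Cone

open CategoryTheory Limits

variable {I : Type u} [CategoryTheory.SmallCategory I] (F : I ⥤ CuCat.{u})

/-- `τ(S)` as an object of `Cu`. -/
noncomputable def tauObj : CuCat.{u} :=
  @CuCat.mk (TauLim F) (tauACM F) (tauPO F) (tau_cu F)

/-- The limit cone over `F` with apex `τ(S)`. -/
noncomputable def tauCone : Cone F where
  pt := tauObj F
  π :=
    { app := fun i => ⟨psi F i, psi_hom F i⟩
      naturality := fun i j g =>
        Subtype.ext (funext fun x => (psi_compat F i j g x).symm) }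

/-- The cone `tauCone` is a limit cone. -/
noncomputable def tauIsLimit : IsLimit (tauCone F) where
  lift c :=
    ⟨alph F c.pt.cu (fun i => (c.π.app i).1) (fun i => (c.π.app i).2)
        (fun i j g x => congrFun (congrArg Subtype.val (c.w g)) x),
      alph_isCuHom F c.pt.cu _ _ _⟩
  fac c i := Subtype.ext (funext fun x =>
    psi_alph F c.pt.cu (fun i => (c.π.app i).1) (fun i => (c.π.app i).2)
      (fun i j g x => congrFun (congrArg Subtype.val (c.w g)) x) i x)
  uniq c m hm := by
    refine Subtype.ext ?_
    exact alph_eq_of F c.pt.cu (fun i => (c.π.app i).1) (fun i => (c.π.app i).2)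
      (fun i j g x => congrFun (congrArg Subtype.val (c.w g)) x) m.2
      (fun i x => congrFun (congrArg Subtype.val (hm i)) x)

end Cone

end CuProof


/-- **The category Cu is complete**, and the limit of `F : I ⥤ Cu` is the
`τ`-completion `τ(S)` of the limit `S` of `F` in `Q` (the compatible families with
the componentwise way-below relation), together with the endpoint-induced morphisms
`ψ_i = τ(π_i)`. -/
theorem cu_complete :
    (∀ (I : Type u) (_ : SmallCategory I) (F : I ⥤ CuCat.{u}), Limits.HasLimit F) ∧
    ∀ (I : Type u) (_ : SmallCategory I) (F : I ⥤ CuCat.{u}),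
      ∃ (_ : AddCommMonoid (TauLim F)) (_ : PartialOrder (TauLim F)),
        (∀ f g : QPath ↥(compatSubmonoidCu F) (cuRelPW F),
          Tau.mk f ≤ Tau.mk g ↔ QPath.LE f g) ∧
        (∀ f g h : QPath ↥(compatSubmonoidCu F) (cuRelPW F),
          (∀ t, h.toFun t = f.toFun t + g.toFun t) →
          (Tau.mk f + Tau.mk g : TauLim F) = Tau.mk h) ∧
        (∀ h : QPath ↥(compatSubmonoidCu F) (cuRelPW F),
          (∀ t, h.toFun t = 0) → (0 : TauLim F) = Tau.mk h) ∧
        CuAxioms (TauLim F) ∧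
        ∃ ψ : ∀ i : I, TauLim F → (F.obj i).carrier,
          (∀ i, IsCuHom (ψ i)) ∧
          (∀ (i : I) (f : QPath ↥(compatSubmonoidCu F) (cuRelPW F)),
            ψ i (Tau.mk f) = (f.toFun ⟨0, le_refl 0⟩).1 i) ∧
          (∀ (i j : I) (g : i ⟶ j) (x : TauLim F), (F.map g).1 (ψ i x) = ψ j x) ∧
          ∀ (T : Type u) [AddCommMonoid T] [PartialOrder T], CuAxioms T →
            ∀ σ : ∀ i : I, T → (F.obj i).carrier,
              (∀ i, IsCuHom (σ i)) →
              (∀ (i j : I) (g : i ⟶ j) (x : T), (F.map g).1 (σ i x) = σ j x) →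
              ∃! α : T → TauLim F, IsCuHom α ∧ ∀ (i : I) (x : T), ψ i (α x) = σ i x := by
  constructor
  · intro I instI F
    exact CategoryTheory.Limits.HasLimit.mk ⟨CuProof.tauCone F, CuProof.tauIsLimit F⟩
  · intro I instI F
    refine ⟨CuProof.tauACM F, CuProof.tauPO F, ?_, ?_, ?_, CuProof.tau_cu F, ?_⟩
    · exact fun f g => CuProof.mk_le_mk F
    · intro f g h heq
      rw [CuProof.mk_add_mk F]
      exact congrArg Tau.mk (QPath.ext' fun t => (heq t).symm)
    · intro h h0
      rw [CuProof.tau_zero_eq F]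
      exact congrArg Tau.mk (QPath.ext' fun t => (h0 t).symm)
    · refine ⟨CuProof.psi F, CuProof.psi_hom F, fun i f => rfl, CuProof.psi_compat F, ?_⟩
      intro T instAdd instPO hT σ hσ hcomp
      exact ⟨CuProof.alph F hT σ hσ hcomp,
        ⟨CuProof.alph_isCuHom F hT σ hσ hcomp, CuProof.psi_alph F hT σ hσ hcomp⟩,
        fun β hβ => CuProof.alph_eq_of F hT σ hσ hcomp hβ.1 hβ.2⟩
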